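/- arXiv:2102.02691 — 10 statements merged into one kernel-verified Lean document; each statement's English description precedes it below -/
import Mathlib

section
/- In the HMC setting, the operator T preserves total mass: for every measurable h : 𝐐 → ℝ with h ≥ 0 and ∫_𝐐 h dμ < ∞, one has ∫_𝐐 (T h)(q) dμ(q) = ∫_𝐐 h(q) dμ(q). -/
open MeasureTheory Filter Topology

/-- In the HMC setting, the transfer operator `T` preserves total mass:
for every measurable `h : 𝐐 → ℝ` with `h ≥ 0` and `∫ h dμ < ∞`,
`∫ (T h) dμ = ∫ h dμ`. -/
theorem hmc_transfer_preserves_mass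
    {α β : Type*} [MeasurableSpace α] [MeasurableSpace β]
    (μ : Measure α) (ν : Measure β) [SigmaFinite μ] [SigmaFinite ν]
    (f : α → ℝ) (hf : Measurable f) (hfpos : ∀ᵐ q ∂μ, 0 < f q)
    (hfint : Integrable f μ) (hfI : 0 < ∫ q, f q ∂μ)
    (g : β → ℝ) (hg : Measurable g) (hgnonneg : ∀ p, 0 ≤ g p)
    (hgI : ∫ p, g p ∂ν = 1)
    (H : α × β → α × β) (hHmeas : Measurable H) (hHbij : Function.Bijective H)
    (hHmp : MeasurePreserving H (μ.prod ν) (μ.prod ν))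
    (hinv : ∀ᵐ x ∂(μ.prod ν), f (H x).1 * g (H x).2 = f x.1 * g x.2)
    (h : α → ℝ) (hh : Measurable h) (hhnonneg : ∀ q, 0 ≤ h q)
    (hhint : Integrable h μ) :
    ∫ q, (∫ p, h (H (q, p)).1 * g (H (q, p)).2 ∂ν) ∂μ = ∫ q, h q ∂μ := by
  have hgint : Integrable g ν := by
    by_contra hgint
    rw [integral_undef hgint] at hgI
    norm_num at hgI
  have hFint : Integrable (fun x : α × β => h x.1 * g x.2) (μ.prod ν) :=
    hhint.mul_prod hgint
  have hFm : AEStronglyMeasurable (fun x : α × β => h x.1 * g x.2)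
      (Measure.map H (μ.prod ν)) := by
    rw [hHmp.map_eq]; exact hFint.aestronglyMeasurable
  have hcomp : Integrable (fun x => h (H x).1 * g (H x).2) (μ.prod ν) := by
    have h1 : Integrable (fun x : α × β => h x.1 * g x.2) (Measure.map H (μ.prod ν)) := by
      rw [hHmp.map_eq]; exact hFint
    exact (integrable_map_measure hFm hHmeas.aemeasurable).mp h1
  calc ∫ q, (∫ p, h (H (q, p)).1 * g (H (q, p)).2 ∂ν) ∂μ
      = ∫ x : α × β, h (H x).1 * g (H x).2 ∂(μ.prod ν) := (integral_prod _ hcomp).symm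
    _ = ∫ x : α × β, h x.1 * g x.2 ∂(μ.prod ν) := by
        conv_rhs => rw [← hHmp.map_eq]
        rw [integral_map hHmeas.aemeasurable hFm]
    _ = (∫ q, h q ∂μ) * ∫ p, g p ∂ν := integral_prod_mul h g
    _ = ∫ q, h q ∂μ := by rw [hgI, mul_one]
end

section
/- In the HMC setting, T is a contraction in the weighted L² norm: for every measurable h : 𝐐 → ℝ with h ≥ 0 and ‖h‖₂ < ∞ one has ‖T h‖₂ ≤ ‖h‖₂, i.e. ∫_𝐐 (T h)(q)² / f(q) dμ(q) ≤ ∫_𝐐 h(q)² / f(q) dμ(q). -/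
open MeasureTheory Filter Topology
open scoped ENNReal

/-- Cauchy–Schwarz for `lintegral`: `(∫⁻ U*G)^2 ≤ (∫⁻ U^2*G) * (∫⁻ G)`. -/
lemma lintegral_cauchy_schwarz_aux {β : Type*} [MeasurableSpace β] (ν : Measure β)
    {U G : β → ℝ≥0∞} (hU : Measurable U) (hG : Measurable G) :
    (∫⁻ p, U p * G p ∂ν) ^ 2 ≤ (∫⁻ p, U p ^ 2 * G p ∂ν) * (∫⁻ p, G p ∂ν) := by
  have h2 : Real.HolderConjugate 2 2 := ⟨by norm_num, by norm_num, by norm_num⟩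
  have key := ENNReal.lintegral_mul_le_Lp_mul_Lq ν h2
    (f := fun p => U p * G p ^ (1 / 2 : ℝ)) (g := fun p => G p ^ (1 / 2 : ℝ))
    (hU.mul (hG.pow_const _)).aemeasurable (hG.pow_const _).aemeasurable
  have hGhalf : ∀ p, G p ^ (1 / 2 : ℝ) * G p ^ (1 / 2 : ℝ) = G p := by
    intro p
    rw [← ENNReal.rpow_add_of_nonneg _ _ (by norm_num) (by norm_num)]
    norm_num
  have e1 : (∫⁻ p, (fun p => U p * G p ^ (1 / 2 : ℝ)) p
      * (fun p => G p ^ (1 / 2 : ℝ)) p ∂ν) = ∫⁻ p, U p * G p ∂ν := by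
    refine lintegral_congr fun p => ?_
    simp only [mul_assoc, hGhalf]
  have e2 : (∫⁻ p, (U p * G p ^ (1 / 2 : ℝ)) ^ (2 : ℕ) ∂ν) = ∫⁻ p, U p ^ 2 * G p ∂ν := by
    refine lintegral_congr fun p => ?_
    rw [mul_pow, sq (G p ^ (1 / 2 : ℝ)), hGhalf]
  have e3 : (∫⁻ p, (G p ^ (1 / 2 : ℝ)) ^ (2 : ℕ) ∂ν) = ∫⁻ p, G p ∂ν := by
    refine lintegral_congr fun p => ?_
    rw [sq, hGhalf]
  simp only [Pi.mul_apply] at key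
  rw [e1] at key
  calc (∫⁻ p, U p * G p ∂ν) ^ 2
      ≤ ((∫⁻ p, (U p * G p ^ (1 / 2 : ℝ)) ^ (2:ℝ) ∂ν) ^ (1 / 2 : ℝ)
        * (∫⁻ p, (G p ^ (1 / 2 : ℝ)) ^ (2:ℝ) ∂ν) ^ (1 / 2 : ℝ)) ^ 2 := by
        gcongr
    _ = (∫⁻ p, U p ^ 2 * G p ∂ν) * (∫⁻ p, G p ∂ν) := by
        rw [mul_pow, ← ENNReal.rpow_two ((∫⁻ p, (U p * G p ^ (1 / 2 : ℝ)) ^ (2:ℝ) ∂ν) ^ (1 / 2 : ℝ)),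
          ← ENNReal.rpow_two ((∫⁻ p, (G p ^ (1 / 2 : ℝ)) ^ (2:ℝ) ∂ν) ^ (1 / 2 : ℝ)),
          ← ENNReal.rpow_mul, ← ENNReal.rpow_mul]
        norm_num [ENNReal.rpow_one]
        rw [e2, e3]

/-- In the HMC setting, `T` is a contraction in the weighted `L²` norm:
for every measurable `h ≥ 0` with `‖h‖₂ < ∞`,
`∫ (T h)²/f dμ ≤ ∫ h²/f dμ`. -/
theorem hmc_transfer_contraction
    {α β : Type*} [MeasurableSpace α] [MeasurableSpace β]
    (μ : Measure α) (ν : Measure β) [SigmaFinite μ] [SigmaFinite ν]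
    (f : α → ℝ) (hf : Measurable f) (hfpos : ∀ᵐ q ∂μ, 0 < f q)
    (hfint : Integrable f μ) (hfI : 0 < ∫ q, f q ∂μ)
    (g : β → ℝ) (hg : Measurable g) (hgnonneg : ∀ p, 0 ≤ g p)
    (hgI : ∫ p, g p ∂ν = 1)
    (H : α × β → α × β) (hHmeas : Measurable H) (hHbij : Function.Bijective H)
    (hHmp : MeasurePreserving H (μ.prod ν) (μ.prod ν))
    (hinv : ∀ᵐ x ∂(μ.prod ν), f (H x).1 * g (H x).2 = f x.1 * g x.2)
    (h : α → ℝ) (hh : Measurable h) (hhnonneg : ∀ q, 0 ≤ h q)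
    (hhL2 : ∫⁻ q, ENNReal.ofReal (h q ^ 2 / f q) ∂μ < ⊤) :
    ∫⁻ q, ENNReal.ofReal ((∫ p, h (H (q, p)).1 * g (H (q, p)).2 ∂ν) ^ 2 / f q) ∂μ
      ≤ ∫⁻ q, ENNReal.ofReal (h q ^ 2 / f q) ∂μ := by
  -- basic measurable ingredients
  have hQm : Measurable fun x : α × β => (H x).1 := measurable_fst.comp hHmeas
  have hPm : Measurable fun x : α × β => (H x).2 := measurable_snd.comp hHmeas
  set U : α × β → ℝ≥0∞ := fun x => ENNReal.ofReal (h (H x).1 / f (H x).1) with hUdef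
  have hUm : Measurable U := ((hh.comp hQm).div (hf.comp hQm)).ennreal_ofReal
  set G : β → ℝ≥0∞ := fun p => ENNReal.ofReal (g p) with hGdef
  have hGm : Measurable G := hg.ennreal_ofReal
  -- `g` is integrable and `∫⁻ G = 1`
  have hgint : Integrable g ν := by
    by_contra hng
    rw [integral_undef hng] at hgI
    norm_num at hgI
  have hG1 : ∫⁻ p, G p ∂ν = 1 := by
    rw [hGdef, ← ofReal_integral_eq_lintegral_ofReal hgint (Eventually.of_forall hgnonneg), hgI,
      ENNReal.ofReal_one]
  -- positivity almost everywhere on the product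
  have hfq : ∀ᵐ x ∂μ.prod ν, 0 < f x.1 := by
    rw [ae_iff] at hfpos ⊢
    have hset : {x : α × β | ¬ 0 < f x.1} = {q | ¬ 0 < f q} ×ˢ (Set.univ : Set β) := by
      ext ⟨q, p⟩; simp
    rw [hset, Measure.prod_prod, hfpos, zero_mul]
  have hfQ : ∀ᵐ x ∂μ.prod ν, 0 < f (H x).1 :=
    hHmp.quasiMeasurePreserving.ae hfq
  -- the key pointwise identities on the product space
  have key : ∀ᵐ x ∂μ.prod ν,
      ENNReal.ofReal (h (H x).1 * g (H x).2)
          = ENNReal.ofReal (f x.1) * (U x * G x.2)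
        ∧ ENNReal.ofReal (f x.1) * (U x ^ 2 * G x.2)
          = ENNReal.ofReal (h (H x).1 ^ 2 / f (H x).1) * ENNReal.ofReal (g (H x).2) := by
    filter_upwards [hinv, hfq, hfQ] with x hx hc ha
    have hbnn : 0 ≤ g (H x).2 := hgnonneg _
    have hdnn : 0 ≤ g x.2 := hgnonneg _
    have henn : 0 ≤ h (H x).1 := hhnonneg _
    have hre1 : f x.1 * (h (H x).1 / f (H x).1 * g x.2) = h (H x).1 * g (H x).2 := by
      field_simp [ha.ne']
      linear_combination -(h (H x).1) * hx
    have hre2 : f x.1 * ((h (H x).1 / f (H x).1) ^ 2 * g x.2)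
        = h (H x).1 ^ 2 / f (H x).1 * g (H x).2 := by
      field_simp [ha.ne']
      linear_combination (-(h (H x).1 ^ 2)) * hx
    constructor
    · rw [hUdef, hGdef]
      rw [← ENNReal.ofReal_mul (div_nonneg henn ha.le), ← ENNReal.ofReal_mul hc.le, hre1]
    · rw [hUdef, hGdef]
      rw [← ENNReal.ofReal_pow (div_nonneg henn ha.le),
        ← ENNReal.ofReal_mul (by positivity), ← ENNReal.ofReal_mul hc.le, hre2,
        ENNReal.ofReal_mul (div_nonneg (by positivity) ha.le)]
  -- pointwise (in `q`) estimate
  have keyq := Measure.ae_ae_of_ae_prod key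
  have step : ∀ᵐ q ∂μ,
      ENNReal.ofReal ((∫ p, h (H (q, p)).1 * g (H (q, p)).2 ∂ν) ^ 2 / f q)
        ≤ ENNReal.ofReal (f q) * ∫⁻ p, U (q, p) ^ 2 * G p ∂ν := by
    filter_upwards [hfpos, keyq] with q hq hkq
    set I := ∫ p, h (H (q, p)).1 * g (H (q, p)).2 ∂ν with hIdef
    have hInn : 0 ≤ I :=
      integral_nonneg fun p => mul_nonneg (hhnonneg _) (hgnonneg _)
    have hUqm : Measurable fun p => U (q, p) := hUm.comp measurable_prodMk_left
    have h1 : ENNReal.ofReal I ≤ ∫⁻ p, ENNReal.ofReal (h (H (q, p)).1 * g (H (q, p)).2) ∂ν := by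
      by_cases hi : Integrable (fun p => h (H (q, p)).1 * g (H (q, p)).2) ν
      · rw [hIdef, ofReal_integral_eq_lintegral_ofReal hi
          (Eventually.of_forall fun p => mul_nonneg (hhnonneg _) (hgnonneg _))]
      · rw [hIdef, integral_undef hi]
        simp
    have h2 : ∫⁻ p, ENNReal.ofReal (h (H (q, p)).1 * g (H (q, p)).2) ∂ν
        = ENNReal.ofReal (f q) * ∫⁻ p, U (q, p) * G p ∂ν := by
      rw [← lintegral_const_mul' _ _ ENNReal.ofReal_ne_top]
      refine lintegral_congr_ae ?_
      filter_upwards [hkq] with p hp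
      exact hp.1
    have h3 : (∫⁻ p, U (q, p) * G p ∂ν) ^ 2 ≤ ∫⁻ p, U (q, p) ^ 2 * G p ∂ν := by
      have := lintegral_cauchy_schwarz_aux ν hUqm hGm
      rwa [hG1, mul_one] at this
    have ha0 : ENNReal.ofReal (f q) ≠ 0 := by
      simp [ENNReal.ofReal_eq_zero, not_le, hq]
    rw [ENNReal.ofReal_div_of_pos hq, ENNReal.ofReal_pow hInn]
    rw [ENNReal.div_le_iff ha0 ENNReal.ofReal_ne_top]
    calc ENNReal.ofReal I ^ 2
        ≤ (ENNReal.ofReal (f q) * ∫⁻ p, U (q, p) * G p ∂ν) ^ 2 := by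
          gcongr
          exact h1.trans_eq h2
      _ = ENNReal.ofReal (f q) ^ 2 * (∫⁻ p, U (q, p) * G p ∂ν) ^ 2 := mul_pow _ _ _
      _ ≤ ENNReal.ofReal (f q) ^ 2 * ∫⁻ p, U (q, p) ^ 2 * G p ∂ν := by gcongr
      _ = ENNReal.ofReal (f q) * (∫⁻ p, U (q, p) ^ 2 * G p ∂ν) * ENNReal.ofReal (f q) := by
          ring
  -- integrate the pointwise estimate and change variables
  have hprodm : Measurable fun x : α × β => ENNReal.ofReal (f x.1) * (U x ^ 2 * G x.2) :=
    ((hf.comp measurable_fst).ennreal_ofReal).mul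
      ((hUm.pow_const 2).mul (hGm.comp measurable_snd))
  calc ∫⁻ q, ENNReal.ofReal ((∫ p, h (H (q, p)).1 * g (H (q, p)).2 ∂ν) ^ 2 / f q) ∂μ
      ≤ ∫⁻ q, ENNReal.ofReal (f q) * ∫⁻ p, U (q, p) ^ 2 * G p ∂ν ∂μ :=
        lintegral_mono_ae step
    _ = ∫⁻ q, ∫⁻ p, ENNReal.ofReal (f q) * (U (q, p) ^ 2 * G p) ∂ν ∂μ := by
        refine lintegral_congr fun q => ?_
        rw [lintegral_const_mul' _ _ ENNReal.ofReal_ne_top]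
    _ = ∫⁻ x, ENNReal.ofReal (f x.1) * (U x ^ 2 * G x.2) ∂(μ.prod ν) :=
        (lintegral_prod _ hprodm.aemeasurable).symm
    _ = ∫⁻ x, ENNReal.ofReal (h (H x).1 ^ 2 / f (H x).1) * ENNReal.ofReal (g (H x).2)
          ∂(μ.prod ν) := by
        refine lintegral_congr_ae ?_
        filter_upwards [key] with x hx
        exact hx.2
    _ = ∫⁻ x : α × β, ENNReal.ofReal (h x.1 ^ 2 / f x.1) * ENNReal.ofReal (g x.2)
          ∂(μ.prod ν) :=
        hHmp.lintegral_comp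
          (((hh.comp measurable_fst).pow_const 2 |>.div (hf.comp measurable_fst)).ennreal_ofReal.mul
            ((hg.comp measurable_snd).ennreal_ofReal))
    _ = (∫⁻ q, ENNReal.ofReal (h q ^ 2 / f q) ∂μ) * ∫⁻ p, G p ∂ν :=
        lintegral_prod_mul ((hh.pow_const 2 |>.div hf).ennreal_ofReal).aemeasurable
          hGm.aemeasurable
    _ = ∫⁻ q, ENNReal.ofReal (h q ^ 2 / f q) ∂μ := by rw [hG1, mul_one]
end

section
/- In the HMC setting, if a measurable h : 𝐐 → ℝ with h ≥ 0 and ‖h‖₂ < ∞ satisfies ‖T h‖₂ = ‖h‖₂, then for μ-a.e. q the function p ↦ (h/f)(Q(q,p)) is equal, (g dν)-a.e. in p, to a constant (depending on q). -/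
open MeasureTheory Filter Topology

/-- In the HMC setting, if a measurable `h ≥ 0` with `‖h‖₂ < ∞`
satisfies `‖T h‖₂ = ‖h‖₂`, then for `μ`-a.e. `q` the function `p ↦ (h/f)(Q(q,p))` is
equal, `(g dν)`-a.e. in `p`, to a constant (depending on `q`). -/
theorem hmc_transfer_norm_equality_implies_constant_fibers
    {α β : Type*} [MeasurableSpace α] [MeasurableSpace β]
    (μ : Measure α) (ν : Measure β) [SigmaFinite μ] [SigmaFinite ν]
    (f : α → ℝ) (hf : Measurable f) (hfpos : ∀ᵐ q ∂μ, 0 < f q)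
    (hfint : Integrable f μ) (hfI : 0 < ∫ q, f q ∂μ)
    (g : β → ℝ) (hg : Measurable g) (hgnonneg : ∀ p, 0 ≤ g p)
    (hgI : ∫ p, g p ∂ν = 1)
    (H : α × β → α × β) (hHmeas : Measurable H) (hHbij : Function.Bijective H)
    (hHmp : MeasurePreserving H (μ.prod ν) (μ.prod ν))
    (hinv : ∀ᵐ x ∂(μ.prod ν), f (H x).1 * g (H x).2 = f x.1 * g x.2)
    (h : α → ℝ) (hh : Measurable h) (hhnonneg : ∀ q, 0 ≤ h q)
    (hhL2 : ∫⁻ q, ENNReal.ofReal (h q ^ 2 / f q) ∂μ < ⊤)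
    (heq : ∫⁻ q, ENNReal.ofReal ((∫ p, h (H (q, p)).1 * g (H (q, p)).2 ∂ν) ^ 2 / f q) ∂μ
      = ∫⁻ q, ENNReal.ofReal (h q ^ 2 / f q) ∂μ) :
    ∀ᵐ q ∂μ, ∃ c : ℝ,
      (fun p => h (H (q, p)).1 / f (H (q, p)).1)
        =ᵐ[ν.withDensity (fun p => ENNReal.ofReal (g p))] (fun _ => c) := by
  classical
  have hQm : Measurable fun x : α × β => (H x).1 := hHmeas.fst
  set φ : α × β → ℝ := fun x => h (H x).1 / f (H x).1 with hφdef
  have hφm : Measurable φ := (hh.comp hQm).div (hf.comp hQm)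
  have hgint : Integrable g ν := by
    by_contra hc
    rw [integral_undef hc] at hgI; norm_num at hgI
  set π : Measure β := ν.withDensity (fun p => ENNReal.ofReal (g p)) with hπdef
  have hπac : π ≪ ν := withDensity_absolutelyContinuous _ _
  have hgm' : Measurable fun p => ENNReal.ofReal (g p) := hg.ennreal_ofReal
  have hgl1 : ∫⁻ p, ENNReal.ofReal (g p) ∂ν = 1 := by
    rw [← ofReal_integral_eq_lintegral_ofReal hgint (Eventually.of_forall hgnonneg), hgI,
      ENNReal.ofReal_one]
  have hπuniv : π Set.univ = 1 := by
    rw [hπdef, withDensity_apply _ MeasurableSet.univ, setLIntegral_univ, hgl1]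
  haveI : IsProbabilityMeasure π := ⟨hπuniv⟩
  -- a.e. positivity/invariance facts on the product
  have h1 : ∀ᵐ x ∂(μ.prod ν), 0 < f x.1 :=
    Measure.quasiMeasurePreserving_fst.ae hfpos
  have hfQpos : ∀ᵐ x ∂(μ.prod ν), 0 < f (H x).1 :=
    hHmp.quasiMeasurePreserving.ae h1
  have hkey : ∀ᵐ x ∂(μ.prod ν),
      h (H x).1 * g (H x).2 = φ x * (f x.1 * g x.2) ∧
      ENNReal.ofReal (h (H x).1 ^ 2 / f (H x).1 * g (H x).2)
        = ENNReal.ofReal (f x.1) * (ENNReal.ofReal (g x.2) * ENNReal.ofReal (φ x ^ 2)) := by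
    filter_upwards [h1, hfQpos, hinv] with x hx1 hx2 hx3
    have hfQ : f (H x).1 ≠ 0 := hx2.ne'
    constructor
    · have : φ x * (f x.1 * g x.2) = φ x * (f (H x).1 * g (H x).2) := by rw [hx3]
      rw [this, hφdef]; field_simp
    · have hr : h (H x).1 ^ 2 / f (H x).1 * g (H x).2 = φ x ^ 2 * (f x.1 * g x.2) := by
        rw [← hx3, hφdef]; field_simp
      rw [hr, ENNReal.ofReal_mul (sq_nonneg _), ENNReal.ofReal_mul hx1.le]; ring
  set N : ENNReal := ∫⁻ q, ENNReal.ofReal (h q ^ 2 / f q) ∂μ with hNdef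
  have hFmeas : Measurable fun x : α × β => ENNReal.ofReal (h x.1 ^ 2 / f x.1 * g x.2) :=
    ((((hh.comp measurable_fst).pow_const 2).div (hf.comp measurable_fst)).mul
      (hg.comp measurable_snd)).ennreal_ofReal
  have hRHS : ∫⁻ x, ENNReal.ofReal (h (H x).1 ^ 2 / f (H x).1 * g (H x).2) ∂(μ.prod ν) = N := by
    have e0 : ∫⁻ x, ENNReal.ofReal (h (H x).1 ^ 2 / f (H x).1 * g (H x).2) ∂(μ.prod ν)
        = ∫⁻ x, ENNReal.ofReal (h x.1 ^ 2 / f x.1 * g x.2) ∂(μ.prod ν) :=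
      hHmp.lintegral_comp hFmeas
    rw [e0]
    have hsplit : ∀ᵐ x ∂(μ.prod ν),
        ENNReal.ofReal (h x.1 ^ 2 / f x.1 * g x.2)
          = ENNReal.ofReal (h x.1 ^ 2 / f x.1) * ENNReal.ofReal (g x.2) := by
      filter_upwards [h1] with x hx
      exact ENNReal.ofReal_mul (div_nonneg (sq_nonneg _) hx.le)
    rw [lintegral_congr_ae hsplit,
      lintegral_prod (fun x : α × β => ENNReal.ofReal (h x.1 ^ 2 / f x.1) * ENNReal.ofReal (g x.2))
        (by fun_prop)]
    simp_rw [lintegral_const_mul _ hgm', hgl1, mul_one]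
    exact hNdef.symm
  set S : α → ENNReal := fun q => ∫⁻ p, ENNReal.ofReal (φ (q, p) ^ 2) ∂π with hSdef
  have hφ2m : Measurable fun x : α × β => ENNReal.ofReal (φ x ^ 2) :=
    (hφm.pow_const 2).ennreal_ofReal
  have hSrw : ∀ q, S q = ∫⁻ p, ENNReal.ofReal (g p) * ENNReal.ofReal (φ (q, p) ^ 2) ∂ν := by
    intro q
    simp only [hSdef, hπdef]
    rw [lintegral_withDensity_eq_lintegral_mul ν hgm'
      (show Measurable fun p => ENNReal.ofReal (φ (q, p) ^ 2) by fun_prop)]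
    rfl
  have hGm : Measurable fun x : α × β =>
      ENNReal.ofReal (f x.1) * (ENNReal.ofReal (g x.2) * ENNReal.ofReal (φ x ^ 2)) :=
    ((hf.comp measurable_fst).ennreal_ofReal).mul
      (((hg.comp measurable_snd).ennreal_ofReal).mul hφ2m)
  have hSmeas : Measurable S := by
    have : Measurable fun x : α × β => ENNReal.ofReal (g x.2) * ENNReal.ofReal (φ x ^ 2) :=
      ((hg.comp measurable_snd).ennreal_ofReal).mul hφ2m
    have h2 : Measurable fun q => ∫⁻ p, ENNReal.ofReal (g p) * ENNReal.ofReal (φ (q, p) ^ 2) ∂ν :=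
      this.lintegral_prod_right'
    have h3 : S = fun q => ∫⁻ p, ENNReal.ofReal (g p) * ENNReal.ofReal (φ (q, p) ^ 2) ∂ν :=
      funext hSrw
    rw [h3]; exact h2
  have hTon : ∫⁻ q, ENNReal.ofReal (f q) * S q ∂μ = N := by
    calc ∫⁻ q, ENNReal.ofReal (f q) * S q ∂μ
        = ∫⁻ q, ∫⁻ p, ENNReal.ofReal (f q) *
            (ENNReal.ofReal (g p) * ENNReal.ofReal (φ (q, p) ^ 2)) ∂ν ∂μ := by
          refine lintegral_congr fun q => ?_
          rw [hSrw q, lintegral_const_mul _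
            (show Measurable fun p => ENNReal.ofReal (g p) * ENNReal.ofReal (φ (q, p) ^ 2)
              by fun_prop)]
      _ = ∫⁻ x, ENNReal.ofReal (f x.1) *
            (ENNReal.ofReal (g x.2) * ENNReal.ofReal (φ x ^ 2)) ∂(μ.prod ν) :=
          (lintegral_prod _ hGm.aemeasurable).symm
      _ = ∫⁻ x, ENNReal.ofReal (h (H x).1 ^ 2 / f (H x).1 * g (H x).2) ∂(μ.prod ν) :=
          lintegral_congr_ae (hkey.mono fun x hx => hx.2.symm)
      _ = N := hRHS
  -- the mean along fibers
  set m : α → ℝ := fun q => ∫ p, φ (q, p) ∂π with hmdef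
  have haeslice : ∀ᵐ q ∂μ, ∀ᵐ p ∂ν,
      h (H (q, p)).1 * g (H (q, p)).2 = φ (q, p) * (f q * g p) :=
    Measure.ae_ae_of_ae_prod (hkey.mono fun x hx => hx.1)
  have hLHS : ∫⁻ q, ENNReal.ofReal ((∫ p, h (H (q, p)).1 * g (H (q, p)).2 ∂ν) ^ 2 / f q) ∂μ
      = ∫⁻ q, ENNReal.ofReal (f q) * ENNReal.ofReal (m q ^ 2) ∂μ := by
    refine lintegral_congr_ae ?_
    filter_upwards [hfpos, haeslice] with q hq hqp
    have hfq : f q ≠ 0 := hq.ne'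
    have hmeq : m q = ∫ p, (g p).toNNReal • φ (q, p) ∂ν := by
      rw [hmdef, hπdef]
      exact integral_withDensity_eq_integral_smul hg.real_toNNReal _
    have hint1 : (∫ p, h (H (q, p)).1 * g (H (q, p)).2 ∂ν) = f q * m q := by
      rw [integral_congr_ae hqp]
      have e1 : (fun p => φ (q, p) * (f q * g p))
          = fun p => f q * ((g p).toNNReal • φ (q, p)) := by
        funext p
        simp only [NNReal.smul_def, Real.coe_toNNReal _ (hgnonneg p), smul_eq_mul]
        ring
      rw [e1, integral_const_mul, ← hmeq]
    rw [hint1]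
    have e2 : (f q * m q) ^ 2 / f q = f q * m q ^ 2 := by field_simp
    rw [e2, ENNReal.ofReal_mul hq.le]
  have hEq2 : ∫⁻ q, ENNReal.ofReal (f q) * ENNReal.ofReal (m q ^ 2) ∂μ = N := by
    rw [← hLHS]; exact heq
  have hNfin : N ≠ ⊤ := hhL2.ne
  -- integrability of φ(q,·)² when S q is finite
  have hIntOf : ∀ q : α, S q ≠ ⊤ → Integrable (fun p => φ (q, p) ^ 2) π := by
    intro q hS
    refine ⟨((hφm.comp measurable_prodMk_left).pow_const 2).aestronglyMeasurable, ?_⟩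
    rw [hasFiniteIntegral_def]
    have : ∫⁻ p, ‖φ (q, p) ^ 2‖ₑ ∂π = S q := by
      rw [hSdef]
      exact lintegral_congr fun p => Real.enorm_eq_ofReal (sq_nonneg _)
    rw [this]
    exact lt_top_iff_ne_top.2 hS
  have hsval : ∀ q : α, ∫ p, φ (q, p) ^ 2 ∂π = (S q).toReal := by
    intro q
    rw [hSdef, integral_eq_lintegral_of_nonneg_ae (Eventually.of_forall fun p => sq_nonneg _)
      (show Measurable fun p => φ (q, p) ^ 2 from
        (hφm.comp measurable_prodMk_left).pow_const 2).aestronglyMeasurable]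
  -- Cauchy–Schwarz/Jensen: (∫ φ dπ)² ≤ ∫ φ² dπ
  have hCS : ∀ q : α, ENNReal.ofReal (m q ^ 2) ≤ S q := by
    intro q
    rcases eq_or_ne (S q) ⊤ with hS | hS
    · simp [hS]
    · have hsqint := hIntOf q hS
      have hmem : MemLp (fun p => φ (q, p)) 2 π :=
        (memLp_two_iff_integrable_sq
          (hφm.comp measurable_prodMk_left).aestronglyMeasurable).2 hsqint
      have hvar := ProbabilityTheory.variance_nonneg (fun p => φ (q, p)) π
      rw [ProbabilityTheory.variance_eq_sub hmem] at hvar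
      have hvar' : (∫ p, φ (q, p) ∂π) ^ 2 ≤ ∫ p, φ (q, p) ^ 2 ∂π := by
        have : (∫ p, ((fun p => φ (q, p)) ^ 2) p ∂π) = ∫ p, φ (q, p) ^ 2 ∂π := by
          simp [Pi.pow_apply]
        rw [this] at hvar
        linarith
      calc ENNReal.ofReal (m q ^ 2) ≤ ENNReal.ofReal ((S q).toReal) := by
            refine ENNReal.ofReal_le_ofReal ?_
            rw [← hsval q]
            simpa [hmdef] using hvar'
        _ = S q := ENNReal.ofReal_toReal hS
  have hle : (fun q => ENNReal.ofReal (f q) * ENNReal.ofReal (m q ^ 2))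
      ≤ᵐ[μ] fun q => ENNReal.ofReal (f q) * S q :=
    Eventually.of_forall fun q => mul_le_mul_right (hCS q) _
  have haeq : (fun q => ENNReal.ofReal (f q) * ENNReal.ofReal (m q ^ 2))
      =ᵐ[μ] fun q => ENNReal.ofReal (f q) * S q :=
    ae_eq_of_ae_le_of_lintegral_le hle (by rw [hEq2]; exact hNfin)
      (hf.ennreal_ofReal.mul hSmeas).aemeasurable (by rw [hTon, hEq2])
  have haelt : ∀ᵐ q ∂μ, ENNReal.ofReal (f q) * S q < ⊤ :=
    ae_lt_top (hf.ennreal_ofReal.mul hSmeas) (by rw [hTon]; exact hNfin)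
  filter_upwards [hfpos, haeq, haelt] with q hq hq2 hq3
  refine ⟨m q, ?_⟩
  have hfne : ENNReal.ofReal (f q) ≠ 0 := by
    simp [ENNReal.ofReal_eq_zero, not_le, hq]
  have hftop : ENNReal.ofReal (f q) ≠ ⊤ := ENNReal.ofReal_ne_top
  have hSne : S q ≠ ⊤ := by
    intro hc
    rw [hc, ENNReal.mul_top hfne] at hq3
    exact absurd hq3 (lt_irrefl _)
  have hSeq : ENNReal.ofReal (m q ^ 2) = S q :=
    (ENNReal.mul_right_inj hfne hftop).1 hq2
  have hsqint := hIntOf q hSne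
  have hmem : MemLp (fun p => φ (q, p)) 2 π :=
    (memLp_two_iff_integrable_sq
      (hφm.comp measurable_prodMk_left).aestronglyMeasurable).2 hsqint
  have hφint : Integrable (fun p => φ (q, p)) π := hmem.integrable one_le_two
  have hs : ∫ p, φ (q, p) ^ 2 ∂π = m q ^ 2 := by
    rw [hsval q, ← hSeq, ENNReal.toReal_ofReal (sq_nonneg _)]
  have hexp : (fun p => (φ (q, p) - m q) ^ 2)
      = fun p => φ (q, p) ^ 2 - 2 * m q * φ (q, p) + m q ^ 2 := by
    funext p; ring
  have hB : Integrable (fun p => 2 * m q * φ (q, p)) π := hφint.const_mul _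
  have hA : Integrable (fun p => φ (q, p) ^ 2 - 2 * m q * φ (q, p)) π := hsqint.sub hB
  have hint2 : Integrable (fun p => (φ (q, p) - m q) ^ 2) π := by
    rw [hexp]
    exact hA.add (integrable_const _)
  have hzero : ∫ p, (φ (q, p) - m q) ^ 2 ∂π = 0 := by
    rw [hexp, integral_add hA (integrable_const _),
      integral_sub hsqint hB, integral_const_mul, integral_const, hs]
    simp only [probReal_univ, one_smul]
    have hmq : (∫ p, φ (q, p) ∂π) = m q := rfl
    rw [hmq]
    ring
  have hae0 := (integral_eq_zero_iff_of_nonneg (fun p => sq_nonneg _) hint2).1 hzero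
  refine hae0.mono fun p hp => ?_
  have hp0 : φ (q, p) - m q = 0 := by
    have := hp
    simpa [pow_eq_zero_iff] using this
  have : φ (q, p) = m q := by linarith
  simpa [hφdef] using this
end

section
/- In the HMC setting with the coverage hypothesis, if a measurable h : 𝐐 → ℝ with h ≥ 0, ∫ h dμ < ∞ and ‖h‖₂ < ∞ satisfies ‖T h‖₂ = ‖h‖₂, then h = α·f μ-a.e., where α = (∫_𝐐 h dμ)/(∫_𝐐 f dμ). -/
open MeasureTheory Filter Topology
open scoped ENNReal NNReal

/-- In the HMC setting with the coverage hypothesis, if a measurable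
`h ≥ 0` with `∫ h dμ < ∞` and `‖h‖₂ < ∞` satisfies `‖T h‖₂ = ‖h‖₂`, then
`h = α·f` μ-a.e., where `α = (∫ h dμ)/(∫ f dμ)`. -/
theorem hmc_norm_equality_implies_proportional
    {α β : Type*} [MeasurableSpace α] [MeasurableSpace β]
    (μ : Measure α) (ν : Measure β) [SigmaFinite μ] [SigmaFinite ν]
    (f : α → ℝ) (hf : Measurable f) (hfpos : ∀ᵐ q ∂μ, 0 < f q)
    (hfint : Integrable f μ) (hfI : 0 < ∫ q, f q ∂μ)
    (g : β → ℝ) (hg : Measurable g) (hgnonneg : ∀ p, 0 ≤ g p)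
    (hgI : ∫ p, g p ∂ν = 1)
    (H : α × β → α × β) (hHmeas : Measurable H) (hHbij : Function.Bijective H)
    (hHmp : MeasurePreserving H (μ.prod ν) (μ.prod ν))
    (hinv : ∀ᵐ x ∂(μ.prod ν), f (H x).1 * g (H x).2 = f x.1 * g x.2)
    (hcoverage : ∀ u : α → ℝ, Measurable u →
      (∀ᵐ q ∂μ, ∃ c : ℝ,
        (fun p => u (H (q, p)).1)
          =ᵐ[ν.withDensity (fun p => ENNReal.ofReal (g p))] (fun _ => c)) →
      ∃ c : ℝ, ∀ᵐ q ∂μ, u q = c)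
    (h : α → ℝ) (hh : Measurable h) (hhnonneg : ∀ q, 0 ≤ h q)
    (hhint : Integrable h μ)
    (hhL2 : ∫⁻ q, ENNReal.ofReal (h q ^ 2 / f q) ∂μ < ⊤)
    (heq : ∫⁻ q, ENNReal.ofReal ((∫ p, h (H (q, p)).1 * g (H (q, p)).2 ∂ν) ^ 2 / f q) ∂μ
      = ∫⁻ q, ENNReal.ofReal (h q ^ 2 / f q) ∂μ) :
    ∀ᵐ q ∂μ, h q = ((∫ x, h x ∂μ) / (∫ x, f x ∂μ)) * f q := by
  classical
  have hgint : Integrable g ν := by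
    by_contra hc
    rw [integral_undef hc] at hgI
    exact one_ne_zero hgI.symm
  set κ : Measure β := ν.withDensity (fun p => ENNReal.ofReal (g p)) with hκdef
  have hg1 : ∫⁻ p, ENNReal.ofReal (g p) ∂ν = 1 := by
    rw [← ofReal_integral_eq_lintegral_ofReal hgint (ae_of_all _ hgnonneg), hgI,
      ENNReal.ofReal_one]
  haveI hκprob : IsProbabilityMeasure κ := by
    constructor
    rw [hκdef, withDensity_apply _ MeasurableSet.univ, setLIntegral_univ, hg1]
  set u : α → ℝ := fun q => h q / f q with hudef
  have hum : Measurable u := hh.div hf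
  have hQm : Measurable fun x : α × β => (H x).1 := measurable_fst.comp hHmeas
  -- positivity of f on the product and after applying H
  have hfpos' : ∀ᵐ x ∂μ.prod ν, 0 < f x.1 := by
    rw [ae_iff]
    have hset : {x : α × β | ¬ 0 < f x.1} = {q | ¬ 0 < f q} ×ˢ (Set.univ : Set β) := by
      ext ⟨a, b⟩; simp
    rw [hset, Measure.prod_prod]
    rw [ae_iff] at hfpos
    rw [hfpos, zero_mul]
  have hfQpos : ∀ᵐ x ∂μ.prod ν, 0 < f (H x).1 :=
    hHmp.quasiMeasurePreserving.ae hfpos'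
  have hae1 : ∀ᵐ q ∂μ, ∀ᵐ p ∂ν, f (H (q, p)).1 * g (H (q, p)).2 = f q * g p :=
    Measure.ae_ae_of_ae_prod hinv
  have hae2 : ∀ᵐ q ∂μ, ∀ᵐ p ∂ν, 0 < f (H (q, p)).1 :=
    Measure.ae_ae_of_ae_prod hfQpos
  set F : α → ℝ := fun q => ∫ p, u (H (q, p)).1 ∂κ with hFdef
  -- conversion of Bochner integrals over κ
  have hκint : ∀ w : β → ℝ, ∫ p, w p ∂κ = ∫ p, g p * w p ∂ν := by
    intro w
    rw [hκdef]
    have hde : (fun p => ENNReal.ofReal (g p))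
        = fun p => ((g p).toNNReal : ENNReal) := rfl
    rw [hde, integral_withDensity_eq_integral_smul hg.real_toNNReal]
    refine integral_congr_ae (ae_of_all _ fun p => ?_)
    simp [NNReal.smul_def, Real.coe_toNNReal _ (hgnonneg p)]
  -- Claim A : T h q = f q * F q a.e.
  have hTh : ∀ᵐ q ∂μ, (∫ p, h (H (q, p)).1 * g (H (q, p)).2 ∂ν) = f q * F q := by
    filter_upwards [hae1, hae2] with q h1 h2
    have hcongr : (fun p => h (H (q, p)).1 * g (H (q, p)).2)
        =ᵐ[ν] fun p => f q * (g p * u (H (q, p)).1) := by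
      filter_upwards [h1, h2] with p hp1 hp2
      have hfQ : f (H (q, p)).1 ≠ 0 := ne_of_gt hp2
      have hhu : h (H (q, p)).1 = u (H (q, p)).1 * f (H (q, p)).1 := by
        have : u (H (q, p)).1 = h (H (q, p)).1 / f (H (q, p)).1 := rfl
        rw [this]
        field_simp
      calc h (H (q, p)).1 * g (H (q, p)).2
          = u (H (q, p)).1 * (f (H (q, p)).1 * g (H (q, p)).2) := by rw [hhu]; ring
        _ = u (H (q, p)).1 * (f q * g p) := by rw [hp1]
        _ = f q * (g p * u (H (q, p)).1) := by ring
    rw [integral_congr_ae hcongr, integral_const_mul]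
    congr 1
    exact (hκint _).symm
  -- rewrite the left side of `heq`
  have hLHS : ∫⁻ q, ENNReal.ofReal ((∫ p, h (H (q, p)).1 * g (H (q, p)).2 ∂ν) ^ 2 / f q) ∂μ
      = ∫⁻ q, ENNReal.ofReal (F q ^ 2 * f q) ∂μ := by
    refine lintegral_congr_ae ?_
    filter_upwards [hTh, hfpos] with q h1 h2
    rw [h1]
    congr 1
    field_simp
  set G : α → ℝ≥0∞ := fun q => ∫⁻ p, ENNReal.ofReal (u (H (q, p)).1 ^ 2) ∂κ with hGdef
  have m1 : Measurable fun x : α × β => ENNReal.ofReal (u (H x).1 ^ 2) :=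
    ((hum.comp hQm).pow_const 2).ennreal_ofReal
  have hGm : Measurable G := m1.lintegral_prod_right'
  -- Claim B
  have hB : ∫⁻ q, G q * ENNReal.ofReal (f q) ∂μ = ∫⁻ q, ENNReal.ofReal (h q ^ 2 / f q) ∂μ := by
    have hWm : Measurable fun x : α × β =>
        ENNReal.ofReal (g x.2) * ENNReal.ofReal (u (H x).1 ^ 2) * ENNReal.ofReal (f x.1) :=
      (((hg.comp measurable_snd).ennreal_ofReal.mul m1).mul
        (hf.comp measurable_fst).ennreal_ofReal)
    have hW'm : Measurable fun y : α × β =>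
        ENNReal.ofReal (u y.1 ^ 2) * ENNReal.ofReal (f y.1) * ENNReal.ofReal (g y.2) :=
      (((hum.comp measurable_fst).pow_const 2).ennreal_ofReal.mul
        (hf.comp measurable_fst).ennreal_ofReal).mul (hg.comp measurable_snd).ennreal_ofReal
    have step1 : ∀ q, G q * ENNReal.ofReal (f q)
        = ∫⁻ p, ENNReal.ofReal (g p) * ENNReal.ofReal (u (H (q, p)).1 ^ 2)
            * ENNReal.ofReal (f q) ∂ν := by
      intro q
      have mq : Measurable fun p => ENNReal.ofReal (u (H (q, p)).1 ^ 2) :=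
        m1.comp measurable_prodMk_left
      simp only [hGdef, hκdef]
      rw [lintegral_withDensity_eq_lintegral_mul ν hg.ennreal_ofReal mq]
      rw [← lintegral_mul_const' (ENNReal.ofReal (f q)) _ ENNReal.ofReal_ne_top]
      rfl
    have step3 : ∀ᵐ x ∂μ.prod ν,
        ENNReal.ofReal (g x.2) * ENNReal.ofReal (u (H x).1 ^ 2) * ENNReal.ofReal (f x.1)
        = ENNReal.ofReal (u (H x).1 ^ 2) * ENNReal.ofReal (f (H x).1)
            * ENNReal.ofReal (g (H x).2) := by
      filter_upwards [hinv, hfpos', hfQpos] with x h1 h2 h3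
      have e1 : ENNReal.ofReal (f (H x).1) * ENNReal.ofReal (g (H x).2)
          = ENNReal.ofReal (f x.1) * ENNReal.ofReal (g x.2) := by
        rw [← ENNReal.ofReal_mul h3.le, ← ENNReal.ofReal_mul h2.le, h1]
      calc ENNReal.ofReal (g x.2) * ENNReal.ofReal (u (H x).1 ^ 2) * ENNReal.ofReal (f x.1)
          = ENNReal.ofReal (u (H x).1 ^ 2)
              * (ENNReal.ofReal (f x.1) * ENNReal.ofReal (g x.2)) := by ring
        _ = ENNReal.ofReal (u (H x).1 ^ 2)
              * (ENNReal.ofReal (f (H x).1) * ENNReal.ofReal (g (H x).2)) := by rw [e1]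
        _ = ENNReal.ofReal (u (H x).1 ^ 2) * ENNReal.ofReal (f (H x).1)
              * ENNReal.ofReal (g (H x).2) := by ring
    calc ∫⁻ q, G q * ENNReal.ofReal (f q) ∂μ
        = ∫⁻ q, ∫⁻ p, ENNReal.ofReal (g p) * ENNReal.ofReal (u (H (q, p)).1 ^ 2)
            * ENNReal.ofReal (f q) ∂ν ∂μ := lintegral_congr step1
      _ = ∫⁻ x, ENNReal.ofReal (g x.2) * ENNReal.ofReal (u (H x).1 ^ 2)
            * ENNReal.ofReal (f x.1) ∂(μ.prod ν) := (lintegral_prod _ hWm.aemeasurable).symm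
      _ = ∫⁻ x, (fun y : α × β => ENNReal.ofReal (u y.1 ^ 2) * ENNReal.ofReal (f y.1)
            * ENNReal.ofReal (g y.2)) (H x) ∂(μ.prod ν) := lintegral_congr_ae step3
      _ = ∫⁻ y, ENNReal.ofReal (u y.1 ^ 2) * ENNReal.ofReal (f y.1)
            * ENNReal.ofReal (g y.2) ∂(μ.prod ν) := hHmp.lintegral_comp hW'm
      _ = ∫⁻ q, ∫⁻ p, ENNReal.ofReal (u q ^ 2) * ENNReal.ofReal (f q)
            * ENNReal.ofReal (g p) ∂ν ∂μ := lintegral_prod _ hW'm.aemeasurable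
      _ = ∫⁻ q, ENNReal.ofReal (u q ^ 2) * ENNReal.ofReal (f q) ∂μ := by
          refine lintegral_congr fun q => ?_
          rw [lintegral_const_mul _ hg.ennreal_ofReal, hg1, mul_one]
      _ = ∫⁻ q, ENNReal.ofReal (h q ^ 2 / f q) ∂μ := by
          refine lintegral_congr_ae ?_
          filter_upwards [hfpos] with q hq
          rw [← ENNReal.ofReal_mul (sq_nonneg _)]
          congr 1
          have hueq : u q = h q / f q := rfl
          rw [hueq]
          field_simp
  have hM : ∫⁻ q, ENNReal.ofReal (F q ^ 2 * f q) ∂μ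
      = ∫⁻ q, ENNReal.ofReal (h q ^ 2 / f q) ∂μ := by
    rw [← hLHS, heq]
  have hMne : ∫⁻ q, ENNReal.ofReal (h q ^ 2 / f q) ∂μ ≠ ⊤ := hhL2.ne
  have hGfin0 : ∀ᵐ q ∂μ, G q * ENNReal.ofReal (f q) < ⊤ := by
    refine ae_lt_top (hGm.mul hf.ennreal_ofReal) ?_
    rw [hB]; exact hMne
  have hGfin : ∀ᵐ q ∂μ, G q < ⊤ := by
    filter_upwards [hGfin0, hfpos] with q h1 h2
    rcases eq_or_ne (G q) ⊤ with hc | hc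
    · rw [hc, ENNReal.top_mul (ENNReal.ofReal_pos.mpr h2).ne'] at h1
      exact absurd h1 (lt_irrefl _)
    · exact hc.lt_top
  have hvm : ∀ q, Measurable fun p => u (H (q, p)).1 := fun q =>
    (hum.comp hQm).comp measurable_prodMk_left
  have hmem : ∀ q, G q < ⊤ → MemLp (fun p => u (H (q, p)).1) 2 κ := by
    intro q hq
    rw [memLp_two_iff_integrable_sq (hvm q).aestronglyMeasurable]
    refine ⟨((hvm q).pow_const 2).aestronglyMeasurable, ?_⟩
    rw [hasFiniteIntegral_iff_ofReal (ae_of_all _ fun p => sq_nonneg _)]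
    exact hq
  have hGeq : ∀ q, (∫ p, u (H (q, p)).1 ^ 2 ∂κ) = (G q).toReal := by
    intro q
    rw [integral_eq_lintegral_of_nonneg_ae (ae_of_all _ fun p => sq_nonneg _)
      ((hvm q).pow_const 2).aestronglyMeasurable]
  have hvar : ∀ q, G q < ⊤ → ProbabilityTheory.variance (fun p => u (H (q, p)).1) κ
      = (G q).toReal - F q ^ 2 := by
    intro q hq
    rw [ProbabilityTheory.variance_eq_sub (hmem q hq), ← hGeq q]
    rfl
  have hle : (fun q => ENNReal.ofReal (F q ^ 2 * f q)) ≤ᵐ[μ]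
      fun q => G q * ENNReal.ofReal (f q) := by
    filter_upwards [hGfin, hfpos] with q h1 h2
    have hv := ProbabilityTheory.variance_nonneg (fun p => u (H (q, p)).1) κ
    rw [hvar q h1] at hv
    have hF2 : F q ^ 2 ≤ (G q).toReal := by linarith
    calc ENNReal.ofReal (F q ^ 2 * f q)
        = ENNReal.ofReal (F q ^ 2) * ENNReal.ofReal (f q) := ENNReal.ofReal_mul (sq_nonneg _)
      _ ≤ ENNReal.ofReal ((G q).toReal) * ENNReal.ofReal (f q) :=
          mul_le_mul_left (ENNReal.ofReal_le_ofReal hF2) _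
      _ = G q * ENNReal.ofReal (f q) := by rw [ENNReal.ofReal_toReal h1.ne]
  have hkey : (fun q => ENNReal.ofReal (F q ^ 2 * f q)) =ᵐ[μ]
      fun q => G q * ENNReal.ofReal (f q) := by
    refine ae_eq_of_ae_le_of_lintegral_le hle ?_ (hGm.mul hf.ennreal_ofReal).aemeasurable ?_
    · rw [hM]; exact hMne
    · rw [hB, hM]
  have hconst : ∀ᵐ q ∂μ, ∃ c : ℝ,
      (fun p => u (H (q, p)).1) =ᵐ[κ] fun _ => c := by
    filter_upwards [hkey, hGfin, hfpos] with q h1 h2 h3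
    refine ⟨F q, ?_⟩
    have heq2 : F q ^ 2 * f q = (G q).toReal * f q := by
      rw [← ENNReal.ofReal_toReal h2.ne, ← ENNReal.ofReal_mul ENNReal.toReal_nonneg] at h1
      exact (ENNReal.ofReal_eq_ofReal_iff (mul_nonneg (sq_nonneg _) h3.le)
        (mul_nonneg ENNReal.toReal_nonneg h3.le)).mp h1
    have hFG : F q ^ 2 = (G q).toReal := mul_right_cancel₀ (ne_of_gt h3) heq2
    have hvar0 : ProbabilityTheory.variance (fun p => u (H (q, p)).1) κ = 0 := by
      rw [hvar q h2, ← hFG]; ring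
    have hev : ProbabilityTheory.evariance (fun p => u (H (q, p)).1) κ = 0 := by
      have hlt := (hmem q h2).evariance_lt_top
      have := (ENNReal.toReal_eq_zero_iff _).mp hvar0
      exact this.resolve_right hlt.ne
    exact (ProbabilityTheory.evariance_eq_zero_iff (hvm q).aemeasurable).mp hev
  obtain ⟨c, hc⟩ := hcoverage u hum hconst
  have hhc : ∀ᵐ q ∂μ, h q = c * f q := by
    filter_upwards [hc, hfpos] with q h1 h2
    have h1' : h q / f q = c := h1
    rw [← h1', div_mul_cancel₀ _ (ne_of_gt h2)]
  have hint2 : ∫ x, h x ∂μ = c * ∫ x, f x ∂μ := by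
    rw [integral_congr_ae hhc, integral_const_mul]
  have hcval : c = (∫ x, h x ∂μ) / (∫ x, f x ∂μ) := by
    rw [hint2, mul_div_assoc, div_self (ne_of_gt hfI), mul_one]
  filter_upwards [hhc] with q hq
  rw [hq, hcval]
end

section
/- In the HMC setting, the target density f is a fixed point of the transfer operator: (T f)(q) = f(q) for μ-a.e. q. -/
open MeasureTheory Filter Topology

/-- In the HMC setting, the target density `f` is a fixed point of the
transfer operator: `(T f)(q) = f(q)` for `μ`-a.e. `q`. -/
theorem hmc_target_is_fixed_point
    {α β : Type*} [MeasurableSpace α] [MeasurableSpace β]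
    (μ : Measure α) (ν : Measure β) [SigmaFinite μ] [SigmaFinite ν]
    (f : α → ℝ) (hf : Measurable f) (hfpos : ∀ᵐ q ∂μ, 0 < f q)
    (hfint : Integrable f μ) (hfI : 0 < ∫ q, f q ∂μ)
    (g : β → ℝ) (hg : Measurable g) (hgnonneg : ∀ p, 0 ≤ g p)
    (hgI : ∫ p, g p ∂ν = 1)
    (H : α × β → α × β) (hHmeas : Measurable H) (hHbij : Function.Bijective H)
    (hHmp : MeasurePreserving H (μ.prod ν) (μ.prod ν))
    (hinv : ∀ᵐ x ∂(μ.prod ν), f (H x).1 * g (H x).2 = f x.1 * g x.2) :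
    ∀ᵐ q ∂μ, (∫ p, f (H (q, p)).1 * g (H (q, p)).2 ∂ν) = f q := by
  have h := Measure.ae_ae_of_ae_prod hinv
  filter_upwards [h] with q hq
  calc (∫ p, f (H (q, p)).1 * g (H (q, p)).2 ∂ν)
      = ∫ p, f q * g p ∂ν := integral_congr_ae hq
    _ = f q * ∫ p, g p ∂ν := integral_const_mul _ _
    _ = f q := by rw [hgI, mul_one]
end

section
/- In the HMC setting, let T† be the operator defined by the inverse motion: (T† h)(q) = ∫_𝐏 h(Q⁻(q,p)) · g(P⁻(q,p)) dν(p), where H⁻¹(q,p) = (Q⁻(q,p), P⁻(q,p)). Then T† is adjoint to T with respect to the weighted inner product: for all measurable h, k : 𝐐 → ℝ with ‖h‖₂ < ∞ and ‖k‖₂ < ∞, one has ⟨T h, k⟩ = ⟨h, T† k⟩. -/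
open MeasureTheory Filter Topology

/-- Core pointwise inequality. -/
lemma hmc_pointwise_ineq {u v a A b B : ℝ} (ha : 0 < a) (hA : 0 < A)
    (hb : 0 ≤ b) (hB : 0 ≤ B) (hAB : A * B = a * b) :
    |u * B * v / a| ≤ u ^ 2 * B / A + v ^ 2 * b / a := by
  have habs : |u * B * v| = |u| * |v| * B := by
    rw [abs_mul, abs_mul, abs_of_nonneg hB]; ring
  rw [abs_div, abs_of_pos ha, habs, div_add_div _ _ hA.ne' ha.ne',
    div_le_div_iff₀ ha (mul_pos hA ha)]
  have h1 : |v| ^ 2 * b * A * a = |v| ^ 2 * A ^ 2 * B := by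
    linear_combination (-(|v| ^ 2 * A)) * hAB
  rw [← sq_abs u, ← sq_abs v]
  nlinarith [h1, mul_nonneg hB (sq_nonneg (|u| * a - |v| * A)),
    mul_nonneg (mul_nonneg (mul_nonneg (mul_nonneg (abs_nonneg u) (abs_nonneg v)) hB) hA.le)
      ha.le]

/-- In the HMC setting, the operator `T†` defined by the inverse motion
`H⁻¹` is adjoint to `T` with respect to the weighted inner product
`⟨a,b⟩ = ∫ a b / f dμ`: for all measurable `h, k` with finite weighted `L²` norms,
`⟨T h, k⟩ = ⟨h, T† k⟩`. -/
theorem hmc_adjoint_operator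
    {α β : Type*} [MeasurableSpace α] [MeasurableSpace β]
    (μ : Measure α) (ν : Measure β) [SigmaFinite μ] [SigmaFinite ν]
    (f : α → ℝ) (hf : Measurable f) (hfpos : ∀ᵐ q ∂μ, 0 < f q)
    (hfint : Integrable f μ) (hfI : 0 < ∫ q, f q ∂μ)
    (g : β → ℝ) (hg : Measurable g) (hgnonneg : ∀ p, 0 ≤ g p)
    (hgI : ∫ p, g p ∂ν = 1)
    (H : α × β → α × β) (hHmeas : Measurable H) (hHbij : Function.Bijective H)
    (hHmp : MeasurePreserving H (μ.prod ν) (μ.prod ν))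
    (hinv : ∀ᵐ x ∂(μ.prod ν), f (H x).1 * g (H x).2 = f x.1 * g x.2)
    (Hinv : α × β → α × β) (hHinvmeas : Measurable Hinv)
    (hleft : Function.LeftInverse Hinv H) (hright : Function.RightInverse Hinv H)
    (h k : α → ℝ) (hh : Measurable h) (hk : Measurable k)
    (hhL2 : ∫⁻ q, ENNReal.ofReal (h q ^ 2 / f q) ∂μ < ⊤)
    (hkL2 : ∫⁻ q, ENNReal.ofReal (k q ^ 2 / f q) ∂μ < ⊤) :
    ∫ q, (∫ p, h (H (q, p)).1 * g (H (q, p)).2 ∂ν) * k q / f q ∂μ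
      = ∫ q, h q * (∫ p, k (Hinv (q, p)).1 * g (Hinv (q, p)).2 ∂ν) / f q ∂μ := by
  -- measurable embedding
  let E : α × β ≃ᵐ α × β :=
    { toFun := H, invFun := Hinv, left_inv := hleft, right_inv := hright,
      measurable_toFun := hHmeas, measurable_invFun := hHinvmeas }
  have hEmb : MeasurableEmbedding H := E.measurableEmbedding
  -- measurability of components
  have hQ : Measurable fun x : α × β => (H x).1 := measurable_fst.comp hHmeas
  have hP : Measurable fun x : α × β => (H x).2 := measurable_snd.comp hHmeas
  -- a.e. positivity of f on the product (first coordinate)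
  have hpos1 : ∀ᵐ x ∂(μ.prod ν), 0 < f x.1 := by
    rw [ae_iff]
    have hset : {x : α × β | ¬ 0 < f x.1} = {q | ¬ 0 < f q} ×ˢ Set.univ := by
      ext x; simp [Set.mem_prod]
    have hμ0 : μ {q | ¬ 0 < f q} = 0 := ae_iff.1 hfpos
    rw [hset, Measure.prod_prod, hμ0, zero_mul]
  have hpos2 : ∀ᵐ x ∂(μ.prod ν), 0 < f (H x).1 :=
    hHmp.quasiMeasurePreserving.ae hpos1
  -- lintegral of g is 1
  have hgInt : Integrable g ν := by
    by_contra hgi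
    rw [integral_undef hgi] at hgI; norm_num at hgI
  have hg1 : ∫⁻ p, ENNReal.ofReal (g p) ∂ν = 1 := by
    rw [← ofReal_integral_eq_lintegral_ofReal hgInt (ae_of_all _ hgnonneg), hgI,
      ENNReal.ofReal_one]
  -- key factorization of lintegrals over the product
  have key : ∀ w : α → ℝ, Measurable w →
      (∫⁻ x : α × β, ENNReal.ofReal (w x.1 ^ 2 * g x.2 / f x.1) ∂(μ.prod ν))
        = ∫⁻ q, ENNReal.ofReal (w q ^ 2 / f q) ∂μ := by
    intro w hw
    have hmeas : Measurable fun x : α × β => ENNReal.ofReal (w x.1 ^ 2 * g x.2 / f x.1) :=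
      ((((hw.comp measurable_fst).pow_const 2).mul (hg.comp measurable_snd)).div
          (hf.comp measurable_fst)).ennreal_ofReal
    rw [lintegral_prod _ hmeas.aemeasurable]
    have hinner : ∀ q p, ENNReal.ofReal (w q ^ 2 * g p / f q)
        = ENNReal.ofReal (w q ^ 2 / f q) * ENNReal.ofReal (g p) := by
      intro q p
      rw [mul_div_right_comm, ENNReal.ofReal_mul' (hgnonneg p)]
    simp_rw [hinner]
    have hin : ∀ q : α, ∫⁻ p, ENNReal.ofReal (w q ^ 2 / f q) * ENNReal.ofReal (g p) ∂ν
        = ENNReal.ofReal (w q ^ 2 / f q) := by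
      intro q
      rw [lintegral_const_mul _ hg.ennreal_ofReal, hg1, mul_one]
    simp_rw [hin]
  -- the two bounding functions
  set A1 : α × β → ℝ := fun x => h (H x).1 ^ 2 * g (H x).2 / f (H x).1 with hA1
  set A2 : α × β → ℝ := fun x => k x.1 ^ 2 * g x.2 / f x.1 with hA2
  have hA1meas : Measurable A1 :=
    (((hh.comp hQ).pow_const 2).mul (hg.comp hP)).div (hf.comp hQ)
  have hA2meas : Measurable A2 :=
    (((hk.comp measurable_fst).pow_const 2).mul (hg.comp measurable_snd)).div
      (hf.comp measurable_fst)
  have hA1nonneg : ∀ᵐ x ∂(μ.prod ν), 0 ≤ A1 x := by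
    filter_upwards [hpos2] with x hx
    exact div_nonneg (mul_nonneg (sq_nonneg _) (hgnonneg _)) hx.le
  have hA2nonneg : ∀ᵐ x ∂(μ.prod ν), 0 ≤ A2 x := by
    filter_upwards [hpos1] with x hx
    exact div_nonneg (mul_nonneg (sq_nonneg _) (hgnonneg _)) hx.le
  have hA1lint : ∫⁻ x, ENNReal.ofReal (A1 x) ∂(μ.prod ν) < ⊤ := by
    have hcomp : (∫⁻ x, ENNReal.ofReal (A1 x) ∂(μ.prod ν))
        = ∫⁻ x : α × β, ENNReal.ofReal (h x.1 ^ 2 * g x.2 / f x.1) ∂(μ.prod ν) :=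
      hHmp.lintegral_comp
        (((((hh.comp measurable_fst).pow_const 2).mul (hg.comp measurable_snd)).div
          (hf.comp measurable_fst)).ennreal_ofReal)
    rw [hcomp, key h hh]; exact hhL2
  have hA2lint : ∫⁻ x, ENNReal.ofReal (A2 x) ∂(μ.prod ν) < ⊤ := by
    rw [key k hk]; exact hkL2
  have hA1int : Integrable A1 (μ.prod ν) :=
    ⟨hA1meas.aestronglyMeasurable, (hasFiniteIntegral_iff_ofReal hA1nonneg).2 hA1lint⟩
  have hA2int : Integrable A2 (μ.prod ν) :=
    ⟨hA2meas.aestronglyMeasurable, (hasFiniteIntegral_iff_ofReal hA2nonneg).2 hA2lint⟩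
  -- the main integrands
  set F : α × β → ℝ := fun x => h (H x).1 * g (H x).2 * k x.1 / f x.1 with hF
  set G : α × β → ℝ := fun x => h x.1 * (k (Hinv x).1 * g (Hinv x).2) / f x.1 with hG
  have hFmeas : Measurable F :=
    (((hh.comp hQ).mul (hg.comp hP)).mul (hk.comp measurable_fst)).div (hf.comp measurable_fst)
  have hGmeas : Measurable G :=
    ((hh.comp measurable_fst).mul
      ((hk.comp (measurable_fst.comp hHinvmeas)).mul
        (hg.comp (measurable_snd.comp hHinvmeas)))).div (hf.comp measurable_fst)
  -- |F| ≤ A1 + A2 a.e.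
  have hbound : ∀ᵐ x ∂(μ.prod ν), ‖F x‖ ≤ A1 x + A2 x := by
    filter_upwards [hpos1, hpos2, hinv] with x h1 h2 h3
    simp only [hF, hA1, hA2, Real.norm_eq_abs]
    exact hmc_pointwise_ineq h1 h2 (hgnonneg _) (hgnonneg _) h3
  have hFint : Integrable F (μ.prod ν) :=
    Integrable.mono' (hA1int.add hA2int) hFmeas.aestronglyMeasurable hbound
  -- F = G ∘ H a.e.
  have hFG : F =ᵐ[μ.prod ν] fun x => G (H x) := by
    filter_upwards [hpos1, hpos2, hinv] with x h1 h2 h3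
    simp only [hF, hG, hleft x]
    field_simp
    linear_combination h (H x).1 * k x.1 * h3
  have hGHint : Integrable (fun x => G (H x)) (μ.prod ν) := hFint.congr hFG
  have hGint : Integrable G (μ.prod ν) := by
    have h2 : Integrable G ((μ.prod ν).map H) ↔ Integrable (G ∘ H) (μ.prod ν) :=
      hEmb.integrable_map_iff
    rw [hHmp.map_eq] at h2
    exact h2.2 hGHint
  -- rewrite LHS as integral over the product
  have hLHS : (∫ q, (∫ p, h (H (q, p)).1 * g (H (q, p)).2 ∂ν) * k q / f q ∂μ)
      = ∫ x, F x ∂(μ.prod ν) := by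
    rw [integral_prod F hFint]
    refine integral_congr_ae (ae_of_all _ fun q => ?_)
    beta_reduce
    rw [mul_div_assoc, ← integral_mul_const]
    refine integral_congr_ae (ae_of_all _ fun p => ?_)
    simp only [hF]; ring
  -- rewrite RHS as integral over the product
  have hRHS : (∫ q, h q * (∫ p, k (Hinv (q, p)).1 * g (Hinv (q, p)).2 ∂ν) / f q ∂μ)
      = ∫ x, G x ∂(μ.prod ν) := by
    rw [integral_prod G hGint]
    refine integral_congr_ae (ae_of_all _ fun q => ?_)
    beta_reduce
    rw [mul_div_right_comm, ← integral_const_mul]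
    refine integral_congr_ae (ae_of_all _ fun p => ?_)
    simp only [hG]; ring
  rw [hLHS, hRHS, integral_congr_ae hFG, hHmp.integral_comp hEmb G]
end

section
/- In the HMC setting, suppose τ : 𝐏 → 𝐏 is a measurable involution (τ ∘ τ = id) preserving the measure ν, that g is τ-invariant (g ∘ τ = g ν-a.e.), and that, extending τ to 𝐐 × 𝐏 by τ(q,p) = (q, τ(p)), one has τ ∘ H⁻¹ ∘ τ = H. Then T equals the adjoint operator T† defined via H⁻¹: for every measurable h with ‖h‖₂ < ∞, (T h)(q) = (T† h)(q) for μ-a.e. q, where (T† h)(q) = ∫_𝐏 h(Q⁻(q,p)) g(P⁻(q,p)) dν(p) and H⁻¹(q,p) = (Q⁻(q,p), P⁻(q,p)). -/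
open MeasureTheory Filter Topology

/-- In the HMC setting, suppose `τ : 𝐏 → 𝐏` is a measurable involution
preserving `ν`, `g` is `τ`-invariant, and (extending `τ` to `𝐐 × 𝐏` by
`τ(q,p) = (q, τ p)`) one has `τ ∘ H⁻¹ ∘ τ = H`. Then `T = T†`: for every measurable `h`
with `‖h‖₂ < ∞`, `(T h)(q) = (T† h)(q)` for `μ`-a.e. `q`. -/
theorem hmc_selfadjoint_of_involution
    {α β : Type*} [MeasurableSpace α] [MeasurableSpace β]
    (μ : Measure α) (ν : Measure β) [SigmaFinite μ] [SigmaFinite ν]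
    (f : α → ℝ) (hf : Measurable f) (hfpos : ∀ᵐ q ∂μ, 0 < f q)
    (hfint : Integrable f μ) (hfI : 0 < ∫ q, f q ∂μ)
    (g : β → ℝ) (hg : Measurable g) (hgnonneg : ∀ p, 0 ≤ g p)
    (hgI : ∫ p, g p ∂ν = 1)
    (H : α × β → α × β) (hHmeas : Measurable H) (hHbij : Function.Bijective H)
    (hHmp : MeasurePreserving H (μ.prod ν) (μ.prod ν))
    (hinv : ∀ᵐ x ∂(μ.prod ν), f (H x).1 * g (H x).2 = f x.1 * g x.2)
    (Hinv : α × β → α × β) (hHinvmeas : Measurable Hinv)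
    (hleft : Function.LeftInverse Hinv H) (hright : Function.RightInverse Hinv H)
    (τ : β → β) (hτmeas : Measurable τ) (hτinvol : ∀ p, τ (τ p) = p)
    (hτmp : MeasurePreserving τ ν ν)
    (hgτ : ∀ᵐ p ∂ν, g (τ p) = g p)
    (hτH : ∀ x : α × β,
      ((Hinv (x.1, τ x.2)).1, τ (Hinv (x.1, τ x.2)).2) = H x)
    (h : α → ℝ) (hh : Measurable h)
    (hhL2 : ∫⁻ q, ENNReal.ofReal (h q ^ 2 / f q) ∂μ < ⊤) :
    ∀ᵐ q ∂μ,
      (∫ p, h (H (q, p)).1 * g (H (q, p)).2 ∂ν)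
        = ∫ p, h (Hinv (q, p)).1 * g (Hinv (q, p)).2 ∂ν := by
  -- measurable equivalences
  let eH : (α × β) ≃ᵐ (α × β) :=
    ⟨⟨H, Hinv, hleft, hright⟩, hHmeas, hHinvmeas⟩
  let eτ : β ≃ᵐ β := ⟨⟨τ, τ, hτinvol, hτinvol⟩, hτmeas, hτmeas⟩
  have hHinvmp : MeasurePreserving Hinv (μ.prod ν) (μ.prod ν) :=
    (MeasurePreserving.symm eH hHmp)
  -- g ∘ τ = g a.e. on the product
  have h1 : ∀ᵐ x : α × β ∂(μ.prod ν), g (τ x.2) = g x.2 := by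
    have hs : MeasurableSet {p : β | ¬ g (τ p) = g p} :=
      (measurableSet_eq_fun (hg.comp hτmeas) hg).compl
    have hν0 : ν {p : β | ¬ g (τ p) = g p} = 0 := by
      simpa [ae_iff] using hgτ
    rw [ae_iff]
    have hset : {x : α × β | ¬ g (τ x.2) = g x.2}
        = (Set.univ : Set α) ×ˢ {p : β | ¬ g (τ p) = g p} := by
      ext x; simp
    rw [hset, Measure.prod_prod, hν0, mul_zero]
  -- pull back through Hinv
  have h2 : ∀ᵐ x : α × β ∂(μ.prod ν), g (τ (Hinv x).2) = g ((Hinv x).2) :=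
    hHinvmp.quasiMeasurePreserving.ae h1
  -- pull back through (q,p) ↦ (q, τ p)
  have hσmp : MeasurePreserving (fun x : α × β => (x.1, τ x.2)) (μ.prod ν) (μ.prod ν) :=
    (MeasurePreserving.id μ).prod hτmp
  have h3 : ∀ᵐ x : α × β ∂(μ.prod ν),
      g (τ (Hinv (x.1, τ x.2)).2) = g ((Hinv (x.1, τ x.2)).2) :=
    hσmp.quasiMeasurePreserving.ae h2
  -- pointwise identity from hτH
  have h4 : ∀ᵐ x : α × β ∂(μ.prod ν),
      h (H x).1 * g (H x).2
        = h (Hinv (x.1, τ x.2)).1 * g ((Hinv (x.1, τ x.2)).2) := by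
    filter_upwards [h3] with x hx
    have := hτH x
    rw [← this]
    simp [hx]
  have h5 := Measure.ae_ae_of_ae_prod h4
  filter_upwards [h5] with q hq
  have step1 : (∫ p, h (H (q, p)).1 * g (H (q, p)).2 ∂ν)
      = ∫ p, h (Hinv (q, τ p)).1 * g ((Hinv (q, τ p)).2) ∂ν :=
    integral_congr_ae hq
  rw [step1]
  have step2 : (∫ p, h (Hinv (q, τ p)).1 * g ((Hinv (q, τ p)).2) ∂ν)
      = ∫ p, h (Hinv (q, p)).1 * g ((Hinv (q, p)).2) ∂ν :=
    hτmp.integral_comp eτ.measurableEmbedding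
      (fun p => h (Hinv (q, p)).1 * g ((Hinv (q, p)).2))
  exact step2
end

section
/- Let E be a real Hilbert space and T : E → E a continuous linear operator that is self-adjoint (⟨T a, b⟩ = ⟨a, T b⟩ for all a, b) and a contraction (‖T x‖ ≤ ‖x‖ for all x). Let h ∈ E and suppose a subsequence T^{m_n} h converges weakly to h∞ ∈ E. Then liminf_{n→∞} ‖T^n h‖² ≤ ‖h∞‖ · limsup_{n→∞} ‖T^n h‖. -/
open Filter Topology
open scoped RealInnerProductSpace

/-- Let `E` be a real Hilbert space and `T` a continuous linear
self-adjoint contraction on `E`. If a subsequence `T^{m n} h` converges weakly to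
`hinf`, then `liminf ‖T^n h‖² ≤ ‖hinf‖ · limsup ‖T^n h‖`. -/
theorem liminf_sq_le_of_weak_limit
    {E : Type*} [NormedAddCommGroup E] [InnerProductSpace ℝ E] [CompleteSpace E]
    (T : E →L[ℝ] E)
    (hsa : ∀ a b : E, ⟪T a, b⟫ = ⟪a, T b⟫)
    (hcontr : ∀ x : E, ‖T x‖ ≤ ‖x‖)
    (h hinf : E) (m : ℕ → ℕ) (hm : StrictMono m)
    (hweak : ∀ b : E, Tendsto (fun n => ⟪(T ^ m n) h, b⟫) atTop (𝓝 ⟪hinf, b⟫)) :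
    Filter.liminf (fun n => ‖(T ^ n) h‖ ^ 2) atTop
      ≤ ‖hinf‖ * Filter.limsup (fun n => ‖(T ^ n) h‖) atTop := by
  set a : ℕ → ℝ := fun n => ‖(T ^ n) h‖ with ha
  -- self-adjointness of powers
  have hpow : ∀ (k : ℕ) (x y : E), ⟪(T ^ k) x, y⟫ = ⟪x, (T ^ k) y⟫ := by
    intro k
    induction k with
    | zero => simp
    | succ k ih =>
      intro x y
      have hc : ∀ z : E, T ((T ^ k) z) = (T ^ k) (T z) := by
        intro z
        rw [← ContinuousLinearMap.mul_apply, ← ContinuousLinearMap.mul_apply,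
          ← pow_succ', ← pow_succ]
      rw [pow_succ]
      simp only [ContinuousLinearMap.mul_apply]
      rw [ih, hsa, hc]
  have key : ∀ p q : ℕ, ⟪(T ^ p) h, (T ^ q) h⟫ = ⟪(T ^ (q + p)) h, h⟫ := by
    intro p q
    rw [← hpow q]
    rw [← ContinuousLinearMap.mul_apply, ← pow_add]
  have heven : ∀ s : ℕ, ⟪(T ^ (s + s)) h, h⟫ = a s ^ 2 := by
    intro s
    rw [← key s s, real_inner_self_eq_norm_sq]
  -- `a` is antitone with nonnegative values
  have hanti : Antitone a := by
    apply antitone_nat_of_succ_le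
    intro n
    have : (T ^ (n + 1)) h = T ((T ^ n) h) := by
      rw [pow_succ']; rfl
    simp only [ha, this]
    exact hcontr _
  have hbdd : BddBelow (Set.range a) := by
    refine ⟨0, ?_⟩
    rintro x ⟨n, rfl⟩
    exact norm_nonneg _
  set L : ℝ := ⨅ n, a n with hLdef
  have hL : Tendsto a atTop (𝓝 L) := tendsto_atTop_ciInf hanti hbdd
  have hLa : ∀ s, L ≤ a s := fun s => ciInf_le hbdd s
  have hL0 : 0 ≤ L := le_ciInf fun n => norm_nonneg _
  -- pick a parity class occurring infinitely often
  have hor : (∃ᶠ k in atTop, m k % 2 = 0) ∨ ∃ᶠ k in atTop, m k % 2 = 1 := by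
    rw [or_iff_not_imp_left, not_frequently]
    intro hev
    exact (hev.mono fun k hk => ((Nat.mod_two_eq_zero_or_one (m k)).resolve_left hk)).frequently
  obtain ⟨r, hr⟩ : ∃ r, ∃ᶠ k in atTop, m k % 2 = r := hor.elim (fun h => ⟨0, h⟩) (fun h => ⟨1, h⟩)
  obtain ⟨φ, hφmono, hφ⟩ := Filter.extraction_of_frequently_atTop hr
  -- key estimate
  have keyest : ∀ j, L ^ 2 ≤ ‖hinf‖ * a (m (φ j)) := by
    intro j
    set b : E := (T ^ m (φ j)) h with hb
    have h1 : Tendsto (fun k => ⟪(T ^ m (φ k)) h, b⟫) atTop (𝓝 ⟪hinf, b⟫) :=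
      (hweak b).comp hφmono.tendsto_atTop
    have h2 : ∀ k, L ^ 2 ≤ ⟪(T ^ m (φ k)) h, b⟫ := by
      intro k
      have e1 := hφ j
      have e2 := hφ k
      have hr2 : r < 2 := by
        rcases hor with h' | h'
        · omega
        · omega
      obtain ⟨s, hs⟩ : ∃ s, m (φ j) + m (φ k) = s + s := by
        refine ⟨(m (φ j) + m (φ k)) / 2, ?_⟩
        omega
      show L ^ 2 ≤ ⟪(T ^ m (φ k)) h, (T ^ m (φ j)) h⟫
      rw [key, hs, heven]
      exact pow_le_pow_left₀ hL0 (hLa s) 2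
    have h3 : L ^ 2 ≤ ⟪hinf, b⟫ := ge_of_tendsto h1 (Eventually.of_forall h2)
    calc L ^ 2 ≤ ⟪hinf, b⟫ := h3
      _ ≤ ‖hinf‖ * ‖b‖ := real_inner_le_norm _ _
      _ = ‖hinf‖ * a (m (φ j)) := rfl
  have h4 : Tendsto (fun j => a (m (φ j))) atTop (𝓝 L) :=
    hL.comp (hm.comp hφmono).tendsto_atTop
  have h5 : L ^ 2 ≤ ‖hinf‖ * L :=
    ge_of_tendsto (tendsto_const_nhds.mul h4) (Eventually.of_forall keyest)
  have h6 : Filter.liminf (fun n => ‖(T ^ n) h‖ ^ 2) atTop = L ^ 2 := by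
    exact (hL.pow 2).liminf_eq
  have h7 : Filter.limsup (fun n => ‖(T ^ n) h‖) atTop = L := by
    exact hL.limsup_eq
  rw [h6, h7]
  exact h5
end

section
/- Let E be a real Hilbert space and T : E → E a continuous linear operator that is self-adjoint (⟨T a, b⟩ = ⟨a, T b⟩ for all a, b) and a contraction (‖T x‖ ≤ ‖x‖ for all x). Let h ∈ E and suppose the sequence of norms ‖T^n h‖ converges. If a subsequence T^{m_n} h converges weakly to h∞ ∈ E, then ‖h∞‖ = lim_{n→∞} ‖T^n h‖ and the subsequence converges strongly: ‖T^{m_n} h − h∞‖ → 0. -/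
open Filter Topology
open scoped RealInnerProductSpace

/-- Let `E` be a real Hilbert space and `T` a continuous linear
self-adjoint contraction on `E`. If the sequence of norms `‖T^n h‖` converges (to `L`)
and a subsequence `T^{m n} h` converges weakly to `hinf`, then `‖hinf‖ = L` and the
subsequence converges strongly: `‖T^{m n} h − hinf‖ → 0`. -/
theorem weak_limit_is_strong_limit_of_norms_converge
    {E : Type*} [NormedAddCommGroup E] [InnerProductSpace ℝ E] [CompleteSpace E]
    (T : E →L[ℝ] E)
    (hsa : ∀ a b : E, ⟪T a, b⟫ = ⟪a, T b⟫)
    (hcontr : ∀ x : E, ‖T x‖ ≤ ‖x‖)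
    (h hinf : E) (L : ℝ)
    (hL : Tendsto (fun n => ‖(T ^ n) h‖) atTop (𝓝 L))
    (m : ℕ → ℕ) (hm : StrictMono m)
    (hweak : ∀ b : E, Tendsto (fun n => ⟪(T ^ m n) h, b⟫) atTop (𝓝 ⟪hinf, b⟫)) :
    ‖hinf‖ = L ∧ Tendsto (fun n => ‖(T ^ m n) h - hinf‖) atTop (𝓝 0) := by
  -- self-adjointness of powers
  have hsa' : ∀ (k : ℕ) (a b : E), ⟪(T ^ k) a, b⟫ = ⟪a, (T ^ k) b⟫ := by
    intro k
    induction k with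
    | zero => intro a b; simp
    | succ k ih =>
      intro a b
      have h1 : (T ^ (k + 1)) a = (T ^ k) (T a) := by
        rw [pow_succ]; rfl
      have h2 : (T ^ (k + 1)) b = T ((T ^ k) b) := by
        rw [pow_succ']; rfl
      rw [h1, ih (T a) b, hsa, ← h2]
  -- key computation: ⟪T^p h, T^q h⟫ = ‖T^j h‖ ^ 2 when p + q = 2j
  have hkey : ∀ p q j : ℕ, p + q = j + j →
      ⟪(T ^ p) h, (T ^ q) h⟫ = ‖(T ^ j) h‖ * ‖(T ^ j) h‖ := by
    intro p q j hpq
    have : ⟪(T ^ p) h, (T ^ q) h⟫ = ⟪h, (T ^ (p + q)) h⟫ := by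
      rw [hsa' p]
      congr 1
      rw [pow_add]; rfl
    rw [this, hpq]
    have : (T ^ (j + j)) h = (T ^ j) ((T ^ j) h) := by rw [pow_add]; rfl
    rw [this, ← hsa' j, real_inner_self_eq_norm_mul_norm]
  have hL0 : 0 ≤ L := ge_of_tendsto' hL fun n => norm_nonneg _
  -- squares of norms tend to L * L
  have hLsq : Tendsto (fun n => ‖(T ^ n) h‖ * ‖(T ^ n) h‖) atTop (𝓝 (L * L)) :=
    hL.mul hL
  -- pick a parity occurring frequently
  have hpar : (∃ᶠ n in atTop, m n % 2 = 0) ∨ (∃ᶠ n in atTop, m n % 2 = 1) := by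
    rw [← frequently_or_distrib]
    exact Frequently.of_forall fun n => Nat.mod_two_eq_zero_or_one (m n)
  obtain ⟨ε, hε⟩ : ∃ ε : ℕ, ∃ᶠ n in atTop, m n % 2 = ε := by
    rcases hpar with h0 | h1
    · exact ⟨0, h0⟩
    · exact ⟨1, h1⟩
  set F : Filter ℕ := atTop ⊓ Filter.principal {n | m n % 2 = ε} with hF
  have hFne : F.NeBot := frequently_iff_neBot.mp hε
  -- the claim: for n with m n % 2 = ε, ⟪T^{m n} h, hinf⟫ = L * L
  have hclaim : ∀ n : ℕ, m n % 2 = ε → ⟪(T ^ m n) h, hinf⟫ = L * L := by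
    intro n hn
    -- limit along F of fun n' => ⟪T^{m n} h, T^{m n'} h⟫ is ⟪T^{m n} h, hinf⟫
    have t1 : Tendsto (fun n' => ⟪(T ^ m n) h, (T ^ m n') h⟫) F
        (𝓝 ⟪hinf, (T ^ m n) h⟫) := by
      have := (hweak ((T ^ m n) h)).mono_left (inf_le_left : F ≤ atTop)
      exact this.congr fun n' => real_inner_comm _ _
    -- and it is also L * L
    have hj : Tendsto (fun n' => (m n + m n') / 2) atTop atTop := by
      apply tendsto_atTop_atTop.mpr
      intro b
      refine ⟨2 * b, fun n' hn' => ?_⟩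
      have : 2 * b ≤ m n' := le_trans hn' (hm.le_apply)
      have : 2 * b ≤ m n + m n' := le_trans this (Nat.le_add_left _ _)
      omega
    have t2 : Tendsto (fun n' => ⟪(T ^ m n) h, (T ^ m n') h⟫) F (𝓝 (L * L)) := by
      have t3 : Tendsto (fun n' => ‖(T ^ ((m n + m n') / 2)) h‖ *
          ‖(T ^ ((m n + m n') / 2)) h‖) F (𝓝 (L * L)) :=
        (hLsq.comp hj).mono_left (inf_le_left : F ≤ atTop)
      refine t3.congr' ?_
      have hev : ∀ᶠ n' in F, m n' % 2 = ε :=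
        eventually_inf_principal.mpr (Eventually.of_forall fun n' hn' => hn')
      filter_upwards [hev] with n' hn'
      have hsum : m n + m n' = (m n + m n') / 2 + (m n + m n') / 2 := by omega
      exact (hkey (m n) (m n') ((m n + m n') / 2) hsum).symm
    rw [real_inner_comm]
    exact tendsto_nhds_unique t1 t2
  -- conclude ⟪hinf, hinf⟫ = L * L
  have hinner : ⟪hinf, hinf⟫ = L * L := by
    have t1 : Tendsto (fun n => ⟪(T ^ m n) h, hinf⟫) F (𝓝 ⟪hinf, hinf⟫) :=
      (hweak hinf).mono_left (inf_le_left : F ≤ atTop)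
    have t2 : Tendsto (fun n => ⟪(T ^ m n) h, hinf⟫) F (𝓝 (L * L)) := by
      refine tendsto_const_nhds.congr' ?_
      have hev : ∀ᶠ n in F, m n % 2 = ε :=
        eventually_inf_principal.mpr (Eventually.of_forall fun n hn => hn)
      filter_upwards [hev] with n hn
      exact (hclaim n hn).symm
    exact tendsto_nhds_unique t1 t2
  have hnorm : ‖hinf‖ = L := by
    have : ‖hinf‖ * ‖hinf‖ = L * L := by
      rw [← real_inner_self_eq_norm_mul_norm, hinner]
    nlinarith [norm_nonneg hinf, hL0]
  refine ⟨hnorm, ?_⟩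
  -- strong convergence
  have hnorms : Tendsto (fun n => ‖(T ^ m n) h‖) atTop (𝓝 L) :=
    hL.comp hm.tendsto_atTop
  have hsq : Tendsto (fun n => ‖(T ^ m n) h - hinf‖ ^ 2) atTop (𝓝 0) := by
    have hexp : ∀ n, ‖(T ^ m n) h - hinf‖ ^ 2
        = ‖(T ^ m n) h‖ ^ 2 - 2 * ⟪(T ^ m n) h, hinf⟫ + ‖hinf‖ ^ 2 := fun n =>
      norm_sub_sq_real _ _
    have t : Tendsto (fun n => ‖(T ^ m n) h‖ ^ 2 - 2 * ⟪(T ^ m n) h, hinf⟫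
        + ‖hinf‖ ^ 2) atTop (𝓝 (L ^ 2 - 2 * (L * L) + ‖hinf‖ ^ 2)) := by
      have h1 : Tendsto (fun n => ‖(T ^ m n) h‖ ^ 2) atTop (𝓝 (L ^ 2)) :=
        hnorms.pow 2
      have h2 : Tendsto (fun n => 2 * ⟪(T ^ m n) h, hinf⟫) atTop
          (𝓝 (2 * (L * L))) := by
        have := (hweak hinf)
        rw [hinner] at this
        exact this.const_mul 2
      exact (h1.sub h2).add (tendsto_const_nhds (x := ‖hinf‖ ^ 2))
    have : L ^ 2 - 2 * (L * L) + ‖hinf‖ ^ 2 = 0 := by rw [hnorm]; ring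
    rw [this] at t
    exact t.congr fun n => (hexp n).symm
  have := (Real.continuous_sqrt.tendsto 0).comp hsq
  rw [Real.sqrt_zero] at this
  exact this.congr fun n => Real.sqrt_sq (norm_nonneg _)
end

section
/- Let U, V be real d×d matrices and t ∈ ℝ, and let 𝒞 be the 2d×2d block matrix [[0, tV], [−tU, 0]]. Then the matrix exponential of 𝒞 is the block matrix exp(𝒞) = [[C₁, tV·S₂], [−tU·S₁, C₂]], where C₁ = Σ_{n≥0} (−1)ⁿ t^{2n} (VU)ⁿ/(2n)!, C₂ = Σ_{n≥0} (−1)ⁿ t^{2n} (UV)ⁿ/(2n)!, S₁ = Σ_{n≥0} (−1)ⁿ t^{2n} (VU)ⁿ/(2n+1)!, and S₂ = Σ_{n≥0} (−1)ⁿ t^{2n} (UV)ⁿ/(2n+1)! (i.e. C₁ = cos(tA), C₂ = cos(tB), S₁ = sinc(tA), S₂ = sinc(tB) for any A, B with A² = VU, B² = UV). -/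
open Matrix

section Aux
variable {d : ℕ}

lemma hasSum_fromBlocks_aux {fA fB fC fD : ℕ → Matrix (Fin d) (Fin d) ℝ}
    {A B C D : Matrix (Fin d) (Fin d) ℝ}
    (hA : HasSum fA A) (hB : HasSum fB B) (hC : HasSum fC C) (hD : HasSum fD D) :
    HasSum (fun n => Matrix.fromBlocks (fA n) (fB n) (fC n) (fD n))
      (Matrix.fromBlocks A B C D) := by
  let L : (Matrix (Fin d) (Fin d) ℝ × Matrix (Fin d) (Fin d) ℝ) ×
      (Matrix (Fin d) (Fin d) ℝ × Matrix (Fin d) (Fin d) ℝ) →+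
      Matrix (Fin d ⊕ Fin d) (Fin d ⊕ Fin d) ℝ :=
    { toFun := fun p => Matrix.fromBlocks p.1.1 p.1.2 p.2.1 p.2.2
      map_zero' := by simp [Matrix.fromBlocks_zero]
      map_add' := by intro p q; simp [Matrix.fromBlocks_add]}
  have hL : Continuous L := by
    apply continuous_matrix
    rintro (i | i) (j | j) <;>
      simp only [L, AddMonoidHom.coe_mk, ZeroHom.coe_mk, Matrix.fromBlocks_apply₁₁,
        Matrix.fromBlocks_apply₁₂, Matrix.fromBlocks_apply₂₁, Matrix.fromBlocks_apply₂₂] <;>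
      fun_prop
  exact ((hA.prodMk hB).prodMk (hC.prodMk hD)).map L hL

lemma summable_aux (X : Matrix (Fin d) (Fin d) ℝ) (t : ℝ) (m : ℕ → ℕ)
    (hm : ∀ k, Nat.factorial k ≤ m k) :
    Summable fun k : ℕ => ((-1) ^ k * t ^ (2 * k) / (m k : ℝ)) • X ^ k := by
  letI : NormedRing (Matrix (Fin d) (Fin d) ℝ) := Matrix.linftyOpNormedRing
  letI : NormedAlgebra ℝ (Matrix (Fin d) (Fin d) ℝ) := Matrix.linftyOpNormedAlgebra
  refine Summable.of_norm_bounded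
    (NormedSpace.norm_expSeries_summable' (𝕂 := ℝ) ((t ^ 2) • X)) ?_
  intro k
  rw [norm_smul, norm_smul, smul_pow, norm_smul]
  have hX : (0:ℝ) ≤ ‖X ^ k‖ := norm_nonneg _
  have hfac : (0:ℝ) < k.factorial := by exact_mod_cast k.factorial_pos
  have hmk : (0:ℝ) < m k := lt_of_lt_of_le hfac (by exact_mod_cast hm k)
  have habs : ‖(-1:ℝ) ^ k * t ^ (2 * k) / (m k : ℝ)‖ = (t ^ 2) ^ k / (m k : ℝ) := by
    rw [Real.norm_eq_abs, abs_div, abs_mul, abs_pow, abs_pow, abs_neg, abs_one, one_pow,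
      one_mul, abs_of_pos hmk, ← abs_pow, pow_mul, abs_of_nonneg (by positivity)]
  have h1 : ‖(-1:ℝ) ^ k * t ^ (2 * k) / (m k : ℝ)‖ ≤ ‖((k.factorial : ℝ))⁻¹‖ * ‖(t ^ 2) ^ k‖ := by
    rw [habs, Real.norm_eq_abs, Real.norm_eq_abs, abs_of_nonneg (by positivity : (0:ℝ) ≤ (t^2)^k),
      abs_of_nonneg (by positivity : (0:ℝ) ≤ ((k.factorial:ℝ))⁻¹), inv_mul_eq_div]
    apply div_le_div_of_nonneg_left (by positivity) hfac
    exact_mod_cast hm k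
  calc ‖(-1:ℝ) ^ k * t ^ (2 * k) / (m k : ℝ)‖ * ‖X ^ k‖
      ≤ (‖((k.factorial : ℝ))⁻¹‖ * ‖(t ^ 2) ^ k‖) * ‖X ^ k‖ :=
        mul_le_mul_of_nonneg_right h1 hX
    _ = ‖((k.factorial : ℝ))⁻¹‖ * (‖(t ^ 2) ^ k‖ * ‖X ^ k‖) := by ring

end Aux


/-- For real `d×d` matrices `U, V` and `t ∈ ℝ`, the exponential of the
block matrix `𝒞 = [[0, tV], [−tU, 0]]` is the block matrix
`[[cos(tA), tV·sinc(tB)], [−tU·sinc(tA), cos(tB)]]`, where the entries are given by the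
power series `cos(tA) = Σ (−1)ⁿ t^{2n} (VU)ⁿ/(2n)!`, `cos(tB) = Σ (−1)ⁿ t^{2n} (UV)ⁿ/(2n)!`,
`sinc(tA) = Σ (−1)ⁿ t^{2n} (VU)ⁿ/(2n+1)!`, `sinc(tB) = Σ (−1)ⁿ t^{2n} (UV)ⁿ/(2n+1)!`
(for any `A, B` with `A² = VU`, `B² = UV`). -/
theorem exp_block_matrix_hamiltonian
    {d : ℕ} (U V : Matrix (Fin d) (Fin d) ℝ) (t : ℝ) :
    NormedSpace.exp (Matrix.fromBlocks 0 (t • V) (-(t • U)) 0) =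
      Matrix.fromBlocks
        (∑' n : ℕ, ((-1) ^ n * t ^ (2 * n) / (Nat.factorial (2 * n) : ℝ)) • (V * U) ^ n)
        (t • (V * ∑' n : ℕ,
          ((-1) ^ n * t ^ (2 * n) / (Nat.factorial (2 * n + 1) : ℝ)) • (U * V) ^ n))
        (-(t • (U * ∑' n : ℕ,
          ((-1) ^ n * t ^ (2 * n) / (Nat.factorial (2 * n + 1) : ℝ)) • (V * U) ^ n)))
        (∑' n : ℕ, ((-1) ^ n * t ^ (2 * n) / (Nat.factorial (2 * n) : ℝ)) • (U * V) ^ n) := by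
  set M : Matrix (Fin d ⊕ Fin d) (Fin d ⊕ Fin d) ℝ :=
    Matrix.fromBlocks 0 (t • V) (-(t • U)) 0 with hM
  have e : ∀ (A A' B B' C C' D D' : Matrix (Fin d) (Fin d) ℝ), A = A' → B = B' → C = C' →
      D = D' → Matrix.fromBlocks A B C D = Matrix.fromBlocks A' B' C' D' := by
    rintro A _ B _ C _ D _ rfl rfl rfl rfl; rfl
  have esmul : ∀ (a b : ℝ) (X : Matrix (Fin d) (Fin d) ℝ), a = b → a • X = b • X := by
    rintro a b X rfl; rfl
  -- square of M
  have hMsq : M ^ 2 = Matrix.fromBlocks ((-(t ^ 2)) • (V * U)) 0 0 ((-(t ^ 2)) • (U * V)) := by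
    rw [hM, pow_two, Matrix.fromBlocks_multiply]
    refine e _ _ _ _ _ _ _ _ ?_ ?_ ?_ ?_ <;>
      simp [Matrix.smul_mul, Matrix.mul_smul, smul_smul, pow_two, mul_comm]
  -- even powers
  have hM2 : ∀ n : ℕ, M ^ (2 * n) =
      Matrix.fromBlocks ((-(t ^ 2)) ^ n • (V * U) ^ n) 0 0 ((-(t ^ 2)) ^ n • (U * V) ^ n) := by
    intro n
    induction n with
    | zero => simp [Matrix.fromBlocks_one]
    | succ n ih =>
      have h2n : 2 * (n + 1) = 2 * n + 2 := by ring
      rw [h2n, pow_add, ih, hMsq, Matrix.fromBlocks_multiply]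
      refine e _ _ _ _ _ _ _ _ ?_ ?_ ?_ ?_ <;>
        simp only [Matrix.smul_mul, Matrix.mul_smul, smul_smul, Matrix.mul_zero,
          Matrix.zero_mul, add_zero, zero_add, smul_zero, ← pow_succ,
          Matrix.mul_neg, Matrix.neg_mul, smul_neg, neg_zero] <;>
        first
        | rfl
        | exact esmul _ _ _ (by rw [pow_succ]; ring)
  -- commutation
  have hcomm : ∀ n : ℕ, (V * U) ^ n * V = V * (U * V) ^ n := by
    intro n
    induction n with
    | zero => simp
    | succ n ih =>
      rw [pow_succ, pow_succ, mul_assoc ((V * U) ^ n), mul_assoc V U V,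
        ← mul_assoc ((V * U) ^ n) V (U * V), ih, mul_assoc]
  have hcomm' : ∀ n : ℕ, (U * V) ^ n * U = U * (V * U) ^ n := by
    intro n
    induction n with
    | zero => simp
    | succ n ih =>
      rw [pow_succ, pow_succ, mul_assoc ((U * V) ^ n), mul_assoc U V U,
        ← mul_assoc ((U * V) ^ n) U (V * U), ih, mul_assoc]
  -- the four scalar series
  have h1 := (summable_aux (V * U) t (fun n => Nat.factorial (2 * n))
    (fun k => Nat.factorial_le (by omega))).hasSum
  have h2 := (summable_aux (U * V) t (fun n => Nat.factorial (2 * n))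
    (fun k => Nat.factorial_le (by omega))).hasSum
  have h3 := (summable_aux (V * U) t (fun n => Nat.factorial (2 * n + 1))
    (fun k => Nat.factorial_le (by omega))).hasSum
  have h4 := (summable_aux (U * V) t (fun n => Nat.factorial (2 * n + 1))
    (fun k => Nat.factorial_le (by omega))).hasSum
  -- pointwise identification of even terms
  have hfe : ∀ k : ℕ, (((2 * k).factorial : ℝ))⁻¹ • M ^ (2 * k) =
      Matrix.fromBlocks
        (((-1) ^ k * t ^ (2 * k) / (Nat.factorial (2 * k) : ℝ)) • (V * U) ^ k) 0 0
        (((-1) ^ k * t ^ (2 * k) / (Nat.factorial (2 * k) : ℝ)) • (U * V) ^ k) := by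
    intro k
    rw [hM2 k, Matrix.fromBlocks_smul]
    refine e _ _ _ _ _ _ _ _ ?_ ?_ ?_ ?_
    · rw [smul_smul]
      exact esmul _ _ _ (by rw [neg_pow, pow_mul]; ring)
    · exact smul_zero _
    · exact smul_zero _
    · rw [smul_smul]
      exact esmul _ _ _ (by rw [neg_pow, pow_mul]; ring)
  -- pointwise identification of odd terms
  have hfo : ∀ k : ℕ, (((2 * k + 1).factorial : ℝ))⁻¹ • M ^ (2 * k + 1) =
      Matrix.fromBlocks 0
        (t • (V * ((-1) ^ k * t ^ (2 * k) / (Nat.factorial (2 * k + 1) : ℝ)) • (U * V) ^ k))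
        (-(t • (U * ((-1) ^ k * t ^ (2 * k) / (Nat.factorial (2 * k + 1) : ℝ)) • (V * U) ^ k)))
        0 := by
    intro k
    rw [pow_succ, hM2 k, hM, Matrix.fromBlocks_multiply, Matrix.fromBlocks_smul]
    refine e _ _ _ _ _ _ _ _ ?_ ?_ ?_ ?_
    · simp
    · simp only [Matrix.zero_mul, Matrix.mul_zero, add_zero, Matrix.smul_mul, Matrix.mul_smul,
        smul_smul, hcomm k]
      exact esmul _ _ _ (by rw [neg_pow, pow_mul]; ring)
    · simp only [Matrix.zero_mul, Matrix.mul_zero, zero_add, Matrix.mul_neg, Matrix.smul_mul,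
        Matrix.mul_smul, smul_smul, hcomm' k, smul_neg, ← neg_smul]
      exact esmul _ _ _ (by rw [neg_pow, pow_mul]; ring)
    · simp
  -- assembling
  have hB' := (h4.mul_left V).const_smul t
  have hC' := ((h3.mul_left U).const_smul t).neg
  have heven := hasSum_fromBlocks_aux h1 hasSum_zero hasSum_zero h2
  have hodd := hasSum_fromBlocks_aux hasSum_zero hB' hC' hasSum_zero
  rw [NormedSpace.exp_eq_tsum ℝ]
  refine HasSum.tsum_eq ?_
  have htotal := HasSum.even_add_odd (f := fun n : ℕ => ((n.factorial : ℝ))⁻¹ • M ^ n)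
    (by simpa only [hfe] using heven) (by simpa only [hfo] using hodd)
  convert htotal using 1
  · rfl
  rw [Matrix.fromBlocks_add]
  simp
end
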